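/- arXiv:0903.1099 — 8 statements merged into one kernel-verified Lean document; each statement's English description precedes it below -/
import Mathlib

section
/- Let R be a commutative integral domain that is not a field. If R is perfect (every R-module has a projective cover), then R is a field — contradiction; hence a perfect commutative integral domain is a field. -/
universe u

/-- `f : P →ₗ[R] M` is a projective cover of `M`: `P` is projective, `f` is surjective,
and `ker f` is superfluous (small) in `P`. -/
def IsProjectiveCover (R : Type u) [CommRing R] {P M : Type u}
    [AddCommGroup P] [Module R P] [AddCommGroup M] [Module R M] (f : P →ₗ[R] M) : Prop :=
  Module.Projective R P ∧ Function.Surjective f ∧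
    ∀ N : Submodule R P, N ⊔ LinearMap.ker f = ⊤ → N = ⊤

/-- A commutative ring is perfect iff every module has a projective cover. -/
def IsPerfectRing (R : Type u) [CommRing R] : Prop :=
  ∀ (M : Type u) (_ : AddCommGroup M) (_ : Module R M),
    ∃ (P : Type u) (_ : AddCommGroup P) (_ : Module R P) (f : P →ₗ[R] M),
      IsProjectiveCover R f

open Pointwise

/-- A perfect commutative integral domain is a field. -/
theorem perfect_domain_isField (R : Type u) [CommRing R] [IsDomain R]
    (h : IsPerfectRing R) : IsField R := by
  classical
  obtain ⟨P, _, _, f, hproj, hsurj, hsmall⟩ :=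
    h (FractionRing R) inferInstance inferInstance
  -- every nonzero a divides every element of P
  have hdiv : ∀ a : R, a ≠ 0 → ∀ p : P, ∃ y : P, a • y = p := by
    intro a ha
    have haK : algebraMap R (FractionRing R) a ≠ 0 := by
      simpa using (IsFractionRing.injective R (FractionRing R)).ne_iff.mpr ha
    have key : (a • (⊤ : Submodule R P)) ⊔ LinearMap.ker f = ⊤ := by
      rw [eq_top_iff]
      intro p _
      obtain ⟨q, hq⟩ := hsurj ((algebraMap R (FractionRing R) a)⁻¹ * f p)
      have hfq : f (a • q) = f p := by
        rw [map_smul, hq, Algebra.smul_def, mul_inv_cancel_left₀ haK]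
      refine Submodule.mem_sup.mpr ⟨a • q, ?_, p - a • q, ?_, by abel⟩
      · exact Submodule.smul_mem_pointwise_smul q a ⊤ trivial
      · simp [LinearMap.mem_ker, map_sub, hfq]
    have htop := hsmall _ key
    intro p
    have hp : p ∈ a • (⊤ : Submodule R P) := by rw [htop]; trivial
    have hp' : p ∈ a • ((⊤ : Submodule R P) : Set P) := by
      rw [← Submodule.coe_pointwise_smul]; exact hp
    obtain ⟨y, -, hy⟩ := Set.mem_smul_set.mp hp'
    exact ⟨y, hy⟩
  -- pick x with f x = 1 and a functional φ with φ x ≠ 0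
  obtain ⟨x, hx⟩ := hsurj 1
  have hx0 : x ≠ 0 := by
    intro h0
    rw [h0, map_zero] at hx
    exact one_ne_zero hx.symm
  obtain ⟨s, hs⟩ := Module.projective_def'.mp hproj
  have hsx : s x ≠ 0 := by
    intro h0
    have := LinearMap.congr_fun hs x
    rw [LinearMap.comp_apply, h0, map_zero] at this
    exact hx0 (by simpa using this.symm)
  obtain ⟨i, hi⟩ := Finsupp.ne_iff.mp hsx
  simp only [Finsupp.coe_zero, Pi.zero_apply] at hi
  set r : R := s x i with hr
  -- r is divisible by every nonzero a
  have hrdiv : ∀ a : R, a ≠ 0 → ∃ t : R, r = a * t := by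
    intro a ha
    obtain ⟨y, hy⟩ := hdiv a ha x
    refine ⟨s y i, ?_⟩
    rw [hr, ← hy, map_smul]
    simp
  -- r is a unit
  have hr2 : (r * r : R) ≠ 0 := mul_ne_zero hi hi
  obtain ⟨t, ht⟩ := hrdiv (r * r) hr2
  have hru : r * t = 1 := by
    have h1 : r * 1 = r * (r * t) := by rw [mul_one]; nth_rw 1 [ht]; ring
    exact (mul_left_cancel₀ hi h1).symm
  refine ⟨exists_pair_ne R, mul_comm, ?_⟩
  intro a ha
  obtain ⟨t', ht'⟩ := hrdiv a ha
  refine ⟨t' * t, ?_⟩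
  calc a * (t' * t) = (a * t') * t := by ring
  _ = r * t := by rw [← ht']
  _ = 1 := hru
end

section
/- A commutative ring R is perfect if and only if R satisfies the descending chain condition on principal ideals. -/
universe u

/-- An almost perfect domain: an integral domain such that every proper quotient is perfect. -/
def IsAPD (R : Type u) [CommRing R] [IsDomain R] : Prop :=
  ∀ I : Ideal R, I ≠ ⊥ → IsPerfectRing (R ⧸ I)


namespace Bass

variable {R : Type u} [CommRing R]

/-- The generators of the relation submodule. -/
noncomputable def gel (r : ℕ → R) (n : ℕ) : ℕ →₀ R :=
  Finsupp.single n 1 - r n • Finsupp.single (n + 1) 1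

/-- Villamayor-style partial section, with fuel. -/
noncomputable def vil (r : ℕ → R) : ℕ → ℕ → (ℕ →₀ R)
  | 0, _ => 0
  | k + 1, n => gel r n + r n • vil r k (n + 1)

lemma vil_mem (r : ℕ → R) (k n : ℕ) :
    vil r k n ∈ Submodule.span R (Set.range (gel r)) := by
  induction k generalizing n with
  | zero => exact Submodule.zero_mem _
  | succ k ih =>
    exact Submodule.add_mem _ (Submodule.subset_span ⟨n, rfl⟩)
      (Submodule.smul_mem _ _ (ih (n + 1)))

/-- coordinate functionals -/
noncomputable def phi (r : ℕ → R) : ℕ → ((ℕ →₀ R) →ₗ[R] R)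
  | 0 => Finsupp.lapply 0
  | m + 1 => Finsupp.lapply (m + 1) + r m • phi r m

lemma phi_single_hi (r : ℕ → R) (m : ℕ) : ∀ k, m < k → phi r m (Finsupp.single k (1:R)) = 0 := by
  induction m with
  | zero =>
    intro k hk
    simp only [phi, Finsupp.lapply_apply, Finsupp.single_apply]
    rw [if_neg (by omega)]
  | succ m ih =>
    intro k hk
    simp only [phi, LinearMap.add_apply, LinearMap.smul_apply, Finsupp.lapply_apply,
      smul_eq_mul]
    rw [Finsupp.single_apply, if_neg (by omega), ih k (by omega), mul_zero, add_zero]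

lemma phi_gel_hi (r : ℕ → R) (m k : ℕ) (h : m < k) : phi r m (gel r k) = 0 := by
  simp only [gel, map_sub, map_smul, phi_single_hi r m k h,
    phi_single_hi r m (k+1) (by omega), smul_eq_mul, mul_zero, sub_zero]

lemma phi_single_self (r : ℕ → R) (m : ℕ) : phi r m (Finsupp.single m (1:R)) = 1 := by
  cases m with
  | zero => simp [phi]
  | succ m =>
    simp only [phi, LinearMap.add_apply, LinearMap.smul_apply, Finsupp.lapply_apply,
      smul_eq_mul]
    rw [Finsupp.single_apply, if_pos rfl, phi_single_hi r m (m+1) (by omega), mul_zero, add_zero]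

lemma phi_gel_self (r : ℕ → R) (m : ℕ) : phi r m (gel r m) = 1 := by
  simp only [gel, map_sub, map_smul, phi_single_self, smul_eq_mul,
    phi_single_hi r m (m+1) (by omega), mul_zero, sub_zero]

lemma phi_gel_lo (r : ℕ → R) (m k : ℕ) (h : k < m) : phi r m (gel r k) = 0 := by
  induction m with
  | zero => omega
  | succ m ih =>
    simp only [phi, LinearMap.add_apply, LinearMap.smul_apply, smul_eq_mul]
    rcases Nat.lt_succ_iff_lt_or_eq.mp h with h' | rfl
    · rw [ih h', mul_zero, add_zero]
      simp only [gel, map_sub, map_smul, Finsupp.lapply_apply, smul_eq_mul]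
      rw [Finsupp.single_apply, if_neg (by omega), Finsupp.single_apply, if_neg (by omega)]
      ring
    · rw [phi_gel_self, mul_one]
      simp only [gel, map_sub, map_smul, Finsupp.lapply_apply, smul_eq_mul]
      rw [Finsupp.single_apply, if_neg (by omega), Finsupp.single_apply, if_pos rfl]
      ring

lemma exists_bound_phi (r : ℕ → R) {w : ℕ →₀ R}
    (hw : w ∈ Submodule.span R (Set.range (gel r))) :
    ∃ N, ∀ m, N ≤ m → phi r m w = 0 := by
  rw [Finsupp.mem_span_range_iff_exists_finsupp] at hw
  obtain ⟨d, hd⟩ := hw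
  refine ⟨(d.support.sup id) + 1, fun m hm => ?_⟩
  rw [← hd, map_finsuppSum]
  refine Finset.sum_eq_zero fun n hn => ?_
  have h2 : n < m := by
    have := Finset.le_sup (f := id) hn
    simp only [id] at this
    omega
  simp only [map_smul, phi_gel_lo r m n h2, smul_zero]



theorem perfect_to_dcc (hR : IsPerfectRing R) (f : ℕ → R)
    (hf : ∀ n, Ideal.span {f (n + 1)} ≤ Ideal.span {f n}) :
    ∃ n, ∀ m, n ≤ m → Ideal.span {f m} = Ideal.span {f n} := by
  classical
  -- chain multipliers
  have hr : ∀ n, ∃ a, a * f n = f (n + 1) := fun n =>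
    Ideal.mem_span_singleton'.mp (hf n (Ideal.subset_span rfl))
  choose r hrf using hr
  -- chain monotonicity
  have hchain : ∀ n m, n ≤ m → Ideal.span {f m} ≤ Ideal.span {f n} := by
    intro n m h
    induction m with
    | zero => simp_all
    | succ m ih =>
      rcases Nat.le_succ_iff_eq_or_le.mp h with h' | h'
      · exact h' ▸ le_rfl
      · exact (hf m).trans (ih h')
  set G : Submodule R (ℕ →₀ R) := Submodule.span R (Set.range (gel r)) with hG
  obtain ⟨P, _, _, c, hProj, hSurj, hSmall⟩ := hR ((ℕ →₀ R) ⧸ G) inferInstance inferInstance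
  haveI := hProj
  set π : (ℕ →₀ R) →ₗ[R] (ℕ →₀ R) ⧸ G := G.mkQ with hπ
  have hπs : Function.Surjective π := Submodule.mkQ_surjective G
  -- lift the free cover through the projective cover
  obtain ⟨h, hh⟩ := Module.projective_lifting_property c π hSurj
  have hhx : ∀ x, c (h x) = π x := fun x => LinearMap.congr_fun hh x
  -- h is surjective
  have hhs : LinearMap.range h = ⊤ := by
    apply hSmall
    rw [eq_top_iff]
    intro p _
    obtain ⟨x, hx⟩ := hπs (c p)
    refine Submodule.mem_sup.mpr ⟨h x, ⟨x, rfl⟩, p - h x, ?_, by abel⟩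
    rw [LinearMap.mem_ker, map_sub, hhx, hx, sub_self]
  obtain ⟨s, hs⟩ := Module.projective_lifting_property h LinearMap.id
    (LinearMap.range_eq_top.mp hhs)
  have hsx : ∀ p, h (s p) = p := fun p => LinearMap.congr_fun hs p
  -- the kernel of c is trivial
  have hker : LinearMap.ker c = ⊥ := by
    rw [eq_bot_iff]
    intro p hp
    rw [LinearMap.mem_ker] at hp
    -- s p lies in G
    have hspG : s p ∈ G := by
      have : π (s p) = 0 := by rw [← hhx, hsx, hp]
      rwa [hπ, ← LinearMap.mem_ker, Submodule.ker_mkQ] at this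
    -- Villamayor endomorphism fixing s p with range in G
    rw [Finsupp.mem_span_range_iff_exists_finsupp] at hspG
    obtain ⟨d, hd⟩ := hspG
    set N : ℕ := d.support.sup id + 1 with hN
    set θ : (ℕ →₀ R) →ₗ[R] (ℕ →₀ R) :=
      Finsupp.lsum ℕ (fun n => LinearMap.toSpanSingleton R _ (vil r (N - n) n)) with hθ
    have hθsingle : ∀ n, θ (Finsupp.single n 1) = vil r (N - n) n := by
      intro n
      rw [hθ, Finsupp.lsum_single, LinearMap.toSpanSingleton_apply_one]
    have hθG : ∀ v, θ v ∈ G := by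
      intro v
      induction v using Finsupp.induction_linear with
      | zero => simp
      | add a b ha hb => rw [map_add]; exact Submodule.add_mem _ ha hb
      | single a b =>
        have : Finsupp.single a b = b • Finsupp.single a (1:R) := by
          rw [Finsupp.smul_single, smul_eq_mul, mul_one]
        rw [this, map_smul, hθsingle]
        exact Submodule.smul_mem _ _ (vil_mem r _ _)
    have hθgel : ∀ n, n < N → θ (gel r n) = gel r n := by
      intro n hn
      have h1 : N - n = (N - (n+1)) + 1 := by omega
      rw [gel, map_sub, map_smul, hθsingle, hθsingle, h1]
      show vil r ((N - (n+1)) + 1) n - r n • vil r (N - (n+1)) (n+1) = _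
      rw [vil, gel]
      abel
    have hθsp : θ (s p) = s p := by
      conv_rhs => rw [← hd]
      rw [← hd, map_finsuppSum]
      refine Finset.sum_congr rfl fun n hn => ?_
      have hn' : n < N := by
        have := Finset.le_sup (f := id) hn
        simp only [id] at this
        omega
      show θ (d n • gel r n) = d n • gel r n
      rw [map_smul, hθgel n hn']
    -- the endomorphism α of P
    set α : P →ₗ[R] P := h ∘ₗ θ ∘ₗ s with hα
    have hαker : ∀ q, α q ∈ LinearMap.ker c := by
      intro q
      rw [LinearMap.mem_ker, hα]
      show c (h (θ (s q))) = 0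
      rw [hhx, hπ, ← LinearMap.mem_ker, Submodule.ker_mkQ]
      exact hθG _
    have hαp : α p = p := by
      show h (θ (s p)) = p
      rw [hθsp, hsx]
    set β : P →ₗ[R] P := LinearMap.id - α with hβ
    have hβs : LinearMap.range β = ⊤ := by
      apply hSmall
      rw [eq_top_iff]
      intro q _
      exact Submodule.mem_sup.mpr ⟨β q, ⟨q, rfl⟩, α q, hαker q, by simp [hβ]⟩
    obtain ⟨t, ht⟩ := Module.projective_lifting_property β LinearMap.id
      (LinearMap.range_eq_top.mp hβs)
    have htx : ∀ q, β (t q) = q := fun q => LinearMap.congr_fun ht q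
    have hts : LinearMap.range t = ⊤ := by
      apply hSmall
      rw [eq_top_iff]
      intro q _
      refine Submodule.mem_sup.mpr ⟨t (β q), ⟨β q, rfl⟩, q - t (β q), ?_, by abel⟩
      have hker : β (q - t (β q)) = 0 := by rw [map_sub, htx, sub_self]
      have : q - t (β q) = α (q - t (β q)) := by
        have := hker
        rw [hβ, LinearMap.sub_apply, LinearMap.id_apply, sub_eq_zero] at this
        exact this
      rw [this]; exact hαker _
    obtain ⟨z, hz⟩ := LinearMap.range_eq_top.mp hts p
    have hzz : z = 0 := by
      have : β (t z) = z := htx z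
      rw [hz] at this
      rw [← this, hβ, LinearMap.sub_apply, LinearMap.id_apply, hαp, sub_self]
    rw [← hz, hzz, map_zero]
    exact Submodule.zero_mem _
  -- now `h` kills G, and ρ := id - s ∘ h is a projection onto G
  have hhG : ∀ n, h (gel r n) = 0 := by
    intro n
    have : c (h (gel r n)) = 0 := by
      rw [hhx, hπ, ← LinearMap.mem_ker, Submodule.ker_mkQ]
      exact Submodule.subset_span ⟨n, rfl⟩
    rwa [← LinearMap.mem_ker, hker, Submodule.mem_bot] at this
  set ρ : (ℕ →₀ R) →ₗ[R] (ℕ →₀ R) := LinearMap.id - s ∘ₗ h with hρ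
  have hρgel : ∀ n, ρ (gel r n) = gel r n := by
    intro n
    rw [hρ, LinearMap.sub_apply, LinearMap.id_apply]
    show gel r n - s (h (gel r n)) = gel r n
    rw [hhG, map_zero, sub_zero]
  have hρG : ∀ v, ρ v ∈ G := by
    intro v
    have : π (ρ v) = 0 := by
      have hρv : ρ v = v - s (h v) := rfl
      rw [hρv, map_sub, ← hhx (s (h v)), hsx, hhx, sub_self]
    rwa [hπ, ← LinearMap.mem_ker, Submodule.ker_mkQ] at this
  -- coordinates
  set γ : ℕ → (ℕ →₀ R) := fun n => ρ (Finsupp.single n 1) with hγ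
  set cc : ℕ → ℕ → R := fun n m => phi r m (γ n) with hcc
  have hrel : ∀ n m, cc n m - r n * cc (n + 1) m = (if n = m then 1 else 0) := by
    intro n m
    have : γ n - r n • γ (n + 1) = gel r n := by
      rw [hγ]
      show ρ _ - r n • ρ _ = _
      rw [← map_smul, ← map_sub, ← gel, hρgel]
    have h2 := congrArg (phi r m) this
    rw [map_sub, map_smul, smul_eq_mul] at h2
    rw [hcc]
    rcases eq_or_ne n m with rfl | hne
    · rw [if_pos rfl, h2, phi_gel_self]
    · rw [if_neg hne, h2]
      rcases Nat.lt_or_ge n m with h' | h'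
      · exact phi_gel_lo r m n h'
      · exact phi_gel_hi r m n (by omega)
  -- relation for off-diagonal: cc n m = r n * cc (n+1) m when n ≠ m
  have hrel' : ∀ n m, n ≠ m → cc n m = r n * cc (n + 1) m := by
    intro n m hne
    have := hrel n m
    rw [if_neg hne, sub_eq_zero] at this
    exact this
  have hfmul : ∀ n m, n ≠ m → cc n m * f n = cc (n + 1) m * f (n + 1) := by
    intro n m hne
    rw [hrel' n m hne, ← hrf n]; ring
  -- L3: walk from 0 up to m
  have hL3 : ∀ m n, n ≤ m → cc 0 m * f 0 = cc n m * f n := by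
    intro m n hn
    induction n with
    | zero => rfl
    | succ n ih =>
      rw [ih (by omega), hfmul n m (by omega)]
  -- L1: walk from m+1 up to n
  have hL1 : ∀ m n, m + 1 ≤ n → cc (m+1) m * f (m+1) = cc n m * f n := by
    intro m n hn
    induction n with
    | zero => omega
    | succ n ih =>
      rcases Nat.lt_or_ge (m+1) (n+1) with h' | h'
      · rw [ih (by omega), hfmul n m (by omega)]
      · have hmn : m = n := by omega
        subst hmn
        rfl
  -- diagonal step
  have hdiag : ∀ m n, m < n → cc 0 m * f 0 = f m + cc n m * f n := by
    intro m n hmn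
    rw [hL3 m m le_rfl, ← hL1 m n hmn]
    have := hrel m m
    rw [if_pos rfl, sub_eq_iff_eq_add] at this
    rw [this]
    rw [← hrf m]; ring
  -- finite support bound for γ 0
  obtain ⟨N₀, hN₀⟩ := exists_bound_phi r (hρG (Finsupp.single 0 1))
  refine ⟨N₀, fun m hm => ?_⟩
  rcases eq_or_lt_of_le hm with rfl | hlt
  · rfl
  have h0 : cc 0 N₀ * f 0 = 0 := by
    rw [hcc]
    show phi r N₀ (γ 0) * f 0 = 0
    rw [hN₀ N₀ le_rfl, zero_mul]
  have := hdiag N₀ m hlt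
  rw [h0] at this
  have hfN : f N₀ = -(cc m N₀) * f m := by
    linear_combination -this
  apply le_antisymm (hchain N₀ m hm)
  rw [Ideal.span_singleton_le_iff_mem]
  exact Ideal.mem_span_singleton'.mpr ⟨-(cc m N₀), hfN.symm⟩

/-- ordered partial products of a sequence -/
def prodSeq (a : ℕ → R) : ℕ → R
  | 0 => 1
  | n + 1 => a n * prodSeq a n

/-- DCC on principal ideals implies the Jacobson radical is T-nilpotent. -/
lemma tnilp
    (hdcc : ∀ f : ℕ → R, (∀ n, Ideal.span {f (n + 1)} ≤ Ideal.span {f n}) →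
      ∃ n, ∀ m, n ≤ m → Ideal.span {f m} = Ideal.span {f n})
    (a : ℕ → R) (ha : ∀ n, a n ∈ Ideal.jacobson (⊥ : Ideal R)) :
    ∃ n, prodSeq a n = 0 := by
  obtain ⟨n, hn⟩ := hdcc (prodSeq a) (fun n => by
    rw [Ideal.span_singleton_le_span_singleton]
    exact ⟨a n, by rw [prodSeq]; ring⟩)
  refine ⟨n, ?_⟩
  have h1 : prodSeq a n ∈ Ideal.span {prodSeq a (n + 1)} := by
    rw [hn (n + 1) (by omega)]
    exact Ideal.subset_span rfl
  obtain ⟨t, ht⟩ := Ideal.mem_span_singleton'.mp h1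
  have h2 : prodSeq a n * (1 - t * a n) = 0 := by
    rw [prodSeq] at ht
    linear_combination -ht
  have h3 : IsUnit (1 - t * a n) := by
    have := Ideal.mem_jacobson_bot.mp (ha n) (-t)
    convert this using 1
    ring
  obtain ⟨u, hu⟩ := h3
  calc prodSeq a n = prodSeq a n * (1 - t * a n) * ↑u⁻¹ := by
        rw [← hu]
        simp [mul_assoc]
    _ = 0 := by rw [h2, zero_mul]

section konig
variable {M : Type u} [AddCommGroup M] [Module R M]
set_option linter.unusedSectionVars false

/-- the value of the node of the branching tree at a given (reversed) path -/
noncomputable def nodeFn (L : M → List (R × M)) (x : M) : List ℕ → M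
  | [] => x
  | i :: l => ((L (nodeFn L x l)).getD i (0, 0)).2

/-- the coefficient picked up along the last step of a path -/
noncomputable def cf (L : M → List (R × M)) (x : M) : List ℕ → R
  | [] => 1
  | i :: l => ((L (nodeFn L x l)).getD i (0, 0)).1

/-- the product of coefficients along a path -/
noncomputable def prodFn (L : M → List (R × M)) (x : M) : List ℕ → R
  | [] => 1
  | i :: l => cf L x (i :: l) * prodFn L x l

/-- validity of a path -/
def validFn (L : M → List (R × M)) (x : M) : List ℕ → Prop
  | [] => True
  | i :: l => i < (L (nodeFn L x l)).length ∧ validFn L x l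

/-- the finset of valid paths of a given length -/
noncomputable def pathSet (L : M → List (R × M)) (x : M) : ℕ → Finset (List ℕ)
  | 0 => {[]}
  | n + 1 => (pathSet L x n).biUnion
      (fun l => (Finset.range (L (nodeFn L x l)).length).image (fun i => i :: l))

lemma list_sum_eq_range {α β : Type*} [AddCommMonoid β] (g : α → β) (d : α) (l : List α) :
    (l.map g).sum = ∑ i ∈ Finset.range l.length, g (l.getD i d) := by
  induction l with
  | nil => simp
  | cons a l ih =>
    rw [List.map_cons, List.sum_cons, List.length_cons, Finset.sum_range_succ']
    simp only [List.getD_cons_succ, List.getD_cons_zero]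
    rw [ih, add_comm]

lemma pathSet_sum (L : M → List (R × M)) (x : M)
    (hL2 : ∀ y, ((L y).map fun p => p.1 • p.2).sum = y) (n : ℕ) :
    ∑ l ∈ pathSet L x n, prodFn L x l • nodeFn L x l = x := by
  induction n with
  | zero => simp [pathSet, prodFn, nodeFn]
  | succ n ih =>
    have hdisj : ∀ u ∈ (pathSet L x n : Set (List ℕ)), ∀ v ∈ (pathSet L x n : Set (List ℕ)),
        u ≠ v → Disjoint ((Finset.range (L (nodeFn L x u)).length).image (fun i => i :: u))
          ((Finset.range (L (nodeFn L x v)).length).image (fun i => i :: v)) := by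
      intro u _ v _ huv
      simp only [Finset.disjoint_left]
      intro w hw hw'
      simp only [Finset.mem_image, Finset.mem_range] at hw hw'
      obtain ⟨i, _, rfl⟩ := hw
      obtain ⟨j, _, h⟩ := hw'
      exact huv (by injection h with h1 h2; exact h2 ▸ rfl)
    rw [pathSet, Finset.sum_biUnion hdisj]
    have hmain : ∀ l ∈ pathSet L x n,
        (∑ w ∈ (Finset.range (L (nodeFn L x l)).length).image (fun i => i :: l),
          prodFn L x w • nodeFn L x w) = prodFn L x l • nodeFn L x l := by
      intro l _
      rw [Finset.sum_image (by intro a _ b _ h; simpa using h)]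
      have hterm : ∀ i ∈ Finset.range (L (nodeFn L x l)).length,
          prodFn L x (i :: l) • nodeFn L x (i :: l)
            = prodFn L x l • (((L (nodeFn L x l)).getD i (0,0)).1 •
                ((L (nodeFn L x l)).getD i (0,0)).2) := by
        intro i _
        rw [prodFn, cf, nodeFn, mul_smul, smul_comm]
      rw [Finset.sum_congr rfl hterm, ← Finset.smul_sum]
      congr 1
      rw [← list_sum_eq_range (fun p => p.1 • p.2) (0,0) (L (nodeFn L x l))]
      exact hL2 _
    rw [Finset.sum_congr rfl hmain, ih]

lemma valid_append (L : M → List (R × M)) (x : M) (t l : List ℕ)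
    (h : validFn L x (t ++ l)) : validFn L x l := by
  induction t with
  | nil => exact h
  | cons a t ih => exact ih h.2

lemma prod_append_ne_zero (L : M → List (R × M)) (x : M) (t l : List ℕ)
    (h : prodFn L x (t ++ l) ≠ 0) : prodFn L x l ≠ 0 := by
  induction t with
  | nil => exact h
  | cons a t ih =>
    refine ih fun h0 => h ?_
    rw [List.cons_append, prodFn, h0, mul_zero]

lemma mem_pathSet (L : M → List (R × M)) (x : M) (n : ℕ) (l : List ℕ) :
    l ∈ pathSet L x n ↔ l.length = n ∧ validFn L x l := by
  induction n generalizing l with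
  | zero =>
    simp only [pathSet, Finset.mem_singleton]
    constructor
    · rintro rfl; exact ⟨rfl, trivial⟩
    · rintro ⟨h1, _⟩; exact List.length_eq_zero_iff.mp h1
  | succ n ih =>
    simp only [pathSet, Finset.mem_biUnion, Finset.mem_image, Finset.mem_range]
    constructor
    · rintro ⟨l', hl', i, hi, rfl⟩
      obtain ⟨h1, h2⟩ := (ih l').mp hl'
      exact ⟨by simp [h1], hi, h2⟩
    · rintro ⟨h1, h2⟩
      cases l with
      | nil => simp at h1
      | cons i l' =>
        exact ⟨l', (ih l').mpr ⟨by simpa using h1, h2.2⟩, i, h2.1, rfl⟩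

/-- The main Nakayama-type lemma: if `J` is T-nilpotent and `J • M = M` then `M = 0`. -/
theorem nakayama_tnilp (J : Ideal R)
    (hT : ∀ a : ℕ → R, (∀ n, a n ∈ J) → ∃ n, prodSeq a n = 0)
    (hM : (⊤ : Submodule R M) ≤ J • ⊤) (x : M) : x = 0 := by
  classical
  by_contra hx
  -- representation function
  have hrep : ∀ y : M, ∃ l : List (R × M),
      (∀ p ∈ l, p.1 ∈ J) ∧ (l.map fun p => p.1 • p.2).sum = y := by
    intro y
    have hy : y ∈ J • (⊤ : Submodule R M) := hM trivial
    refine Submodule.smul_induction_on hy ?_ ?_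
    · intro a ha m _
      exact ⟨[(a, m)], by simpa using ha, by simp⟩
    · rintro y z ⟨ly, h1, h2⟩ ⟨lz, h3, h4⟩
      refine ⟨ly ++ lz, ?_, ?_⟩
      · intro p hp
        rcases List.mem_append.mp hp with h | h
        · exact h1 p h
        · exact h3 p h
      · rw [List.map_append, List.sum_append, h2, h4]
  choose L hL1 hL2 using hrep
  -- nonzero paths of every length exist
  have hnz : ∀ n, ∃ l, l ∈ pathSet L x n ∧ prodFn L x l ≠ 0 := by
    intro n
    by_contra hcon
    push_neg at hcon
    apply hx
    rw [← pathSet_sum L x hL2 n]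
    refine Finset.sum_eq_zero fun l hl => ?_
    rw [hcon l hl, zero_smul]
  -- the "infinitely extendable" predicate
  set Inf : List ℕ → Prop := fun l => ∀ n, ∃ t : List ℕ,
    t.length = n ∧ validFn L x (t ++ l) ∧ prodFn L x (t ++ l) ≠ 0 with hInf
  have hInfprod : ∀ l, Inf l → validFn L x l ∧ prodFn L x l ≠ 0 := by
    intro l hl
    obtain ⟨t, ht1, ht2, ht3⟩ := hl 0
    rw [List.length_eq_zero_iff.mp ht1, List.nil_append] at ht2 ht3
    exact ⟨ht2, ht3⟩
  have hbase : Inf [] := by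
    intro n
    obtain ⟨l, hl, hlz⟩ := hnz n
    obtain ⟨h1, h2⟩ := (mem_pathSet L x n l).mp hl
    exact ⟨l, h1, by rwa [List.append_nil], by rwa [List.append_nil]⟩
  -- downward closure in length
  have hdown : ∀ (l : List ℕ) (n n' : ℕ), n ≤ n' →
      (∃ t : List ℕ, t.length = n' ∧ validFn L x (t ++ l) ∧ prodFn L x (t ++ l) ≠ 0) →
      (∃ t : List ℕ, t.length = n ∧ validFn L x (t ++ l) ∧ prodFn L x (t ++ l) ≠ 0) := by
    intro l n n' hle
    induction n' with
    | zero =>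
      intro h
      have : n = 0 := by omega
      exact this ▸ h
    | succ n' ih =>
      intro ⟨t, ht1, ht2, ht3⟩
      rcases Nat.lt_or_ge n (n' + 1) with h' | h'
      · cases t with
        | nil => simp at ht1
        | cons a t' =>
          refine ih (by omega) ⟨t', by simpa using ht1, ?_, ?_⟩
          · exact ht2.2
          · exact fun h0 => ht3 (by rw [List.cons_append, prodFn, h0, mul_zero])
      · exact ⟨t, by omega, ht2, ht3⟩
  -- extension step
  have hstep : ∀ l : List ℕ, Inf l → ∃ i, validFn L x (i :: l) ∧ Inf (i :: l) := by
    intro l hl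
    by_contra hcon
    push_neg at hcon
    have hfail : ∀ i : ℕ, ∃ n, validFn L x (i :: l) → ¬ ∃ t : List ℕ,
        t.length = n ∧ validFn L x (t ++ (i :: l)) ∧ prodFn L x (t ++ (i :: l)) ≠ 0 := by
      intro i
      by_cases hvi : validFn L x (i :: l)
      · have hni := hcon i hvi
        rw [hInf] at hni
        rw [not_forall] at hni
        obtain ⟨n, hn⟩ := hni
        exact ⟨n, fun _ => hn⟩
      · exact ⟨0, fun h => absurd h hvi⟩
    choose nf hnf using hfail
    obtain ⟨t, ht1, ht2, ht3⟩ :=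
      hl ((Finset.range (L (nodeFn L x l)).length).sup nf + 1)
    rcases List.eq_nil_or_concat' t with rfl | ⟨t', i, rfl⟩
    · simp at ht1
    · rw [List.append_assoc] at ht2 ht3
      have hisl : ([i] ++ l : List ℕ) = i :: l := rfl
      rw [hisl] at ht2 ht3
      have hvil : validFn L x (i :: l) := valid_append L x t' _ ht2
      have hilen : i < (L (nodeFn L x l)).length := hvil.1
      have hNi : nf i ≤ (Finset.range (L (nodeFn L x l)).length).sup nf :=
        Finset.le_sup (Finset.mem_range.mpr hilen)
      have ht'len : t'.length = (Finset.range (L (nodeFn L x l)).length).sup nf := by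
        rw [List.length_append] at ht1
        simp only [List.length_singleton] at ht1
        omega
      obtain ⟨t'', h1, h2, h3⟩ := hdown (i :: l) (nf i) _ hNi ⟨t', ht'len, ht2, ht3⟩
      exact hnf i hvil ⟨t'', h1, h2, h3⟩
  -- build the infinite branch
  choose pick hpick1 hpick2 using hstep
  let g : ℕ → {p : List ℕ // Inf p} := fun n =>
    Nat.rec ⟨[], hbase⟩ (fun _ p => ⟨pick p.1 p.2 :: p.1, (hpick2 p.1 p.2)⟩) n
  have hg : ∀ n, (g (n + 1)).1 = pick (g n).1 (g n).2 :: (g n).1 := fun n => rfl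
  set a : ℕ → R := fun n => cf L x ((g (n + 1)).1) with ha_def
  have ha : ∀ n, a n ∈ J := by
    intro n
    have hv : validFn L x ((g (n + 1)).1) := by
      rw [hg]
      exact hpick1 (g n).1 (g n).2
    rw [hg] at hv
    have hlt : pick (g n).1 (g n).2 < (L (nodeFn L x (g n).1)).length := hv.1
    show cf L x ((g (n + 1)).1) ∈ J
    rw [hg, cf, List.getD_eq_getElem _ _ hlt]
    exact hL1 _ _ (List.getElem_mem hlt)
  have hprod : ∀ n, prodSeq a n = prodFn L x ((g n).1) := by
    intro n
    induction n with
    | zero => rfl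
    | succ n ih =>
      rw [prodSeq, ih, hg, prodFn]
  obtain ⟨n, hn0⟩ := hT a ha
  have := (hInfprod (g n).1 (g n).2).2
  rw [hprod] at hn0
  exact this hn0

end konig

/-- abbreviation for the DCC hypothesis -/
def DCC (R : Type u) [CommRing R] : Prop :=
  ∀ f : ℕ → R, (∀ n, Ideal.span {f (n + 1)} ≤ Ideal.span {f n}) →
    ∃ n, ∀ m, n ≤ m → Ideal.span {f m} = Ideal.span {f n}

lemma span_chain_mono {A : Type*} [CommRing A] (f : ℕ → A)
    (hf : ∀ n, Ideal.span {f (n + 1)} ≤ Ideal.span {f n}) :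
    ∀ n m, n ≤ m → Ideal.span {f m} ≤ Ideal.span {f n} := by
  intro n m h
  induction m with
  | zero => simp_all
  | succ m ih =>
    rcases Nat.lt_or_ge n (m + 1) with h' | h'
    · exact (hf m).trans (ih (by omega))
    · have : n = m + 1 := by omega
      exact this ▸ le_rfl

lemma dcc_quotient (I : Ideal R) (hdcc : DCC R) : DCC (R ⧸ I) := by
  intro g hg
  have : ∀ n, ∃ ρ : R ⧸ I, ρ * g n = g (n + 1) :=
    fun n => Ideal.mem_span_singleton'.mp (hg n (Ideal.subset_span rfl))
  choose ρ hρ using this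
  have hsurj := Ideal.Quotient.mk_surjective (I := I)
  choose rr hrr using fun n => hsurj (ρ n)
  obtain ⟨y, hy⟩ := hsurj (g 0)
  set c : ℕ → R := fun n => Nat.rec y (fun n cn => rr n * cn) n with hc
  have hcmk : ∀ n, Ideal.Quotient.mk I (c n) = g n := by
    intro n
    induction n with
    | zero => exact hy
    | succ n ih =>
      show Ideal.Quotient.mk I (rr n * c n) = g (n + 1)
      rw [map_mul, hrr, ih, hρ]
  have hcchain : ∀ n, Ideal.span {c (n + 1)} ≤ Ideal.span {c n} := by
    intro n
    rw [Ideal.span_singleton_le_span_singleton]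
    show c n ∣ c (n + 1)
    exact ⟨rr n, by rw [mul_comm]⟩
  obtain ⟨n, hn⟩ := hdcc c hcchain
  refine ⟨n, fun m hm => ?_⟩
  apply le_antisymm (span_chain_mono g hg n m hm)
  rw [Ideal.span_singleton_le_span_singleton]
  have : c n ∈ Ideal.span {c m} := by rw [hn m hm]; exact Ideal.subset_span rfl
  obtain ⟨u, hu⟩ := Ideal.mem_span_singleton'.mp this
  exact ⟨Ideal.Quotient.mk I u, by rw [← hcmk m, ← hcmk n, ← map_mul, ← hu, mul_comm]⟩

/-- every element of the Jacobson radical is nilpotent, given DCC on principal ideals -/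
lemma jac_nil (hdcc : DCC R) {a : R} (ha : a ∈ Ideal.jacobson (⊥ : Ideal R)) :
    ∃ n, a ^ n = 0 := by
  obtain ⟨n, hn⟩ := hdcc (fun n => a ^ n) (fun n => by
    rw [Ideal.span_singleton_le_span_singleton]
    show a ^ n ∣ a ^ (n + 1)
    exact ⟨a, pow_succ a n⟩)
  have h1 : a ^ n ∈ Ideal.span {a ^ (n + 1)} := by
    rw [hn (n + 1) (by omega)]
    exact Ideal.subset_span rfl
  obtain ⟨t, ht⟩ := Ideal.mem_span_singleton'.mp h1
  have h2 : a ^ n * (1 - t * a) = 0 := by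
    rw [pow_succ] at ht
    linear_combination -ht
  have h3 : IsUnit (1 - t * a) := by
    have := Ideal.mem_jacobson_bot.mp ha (-t)
    convert this using 1
    ring
  obtain ⟨u, hu⟩ := h3
  refine ⟨n, ?_⟩
  calc a ^ n = a ^ n * (1 - t * a) * ↑u⁻¹ := by rw [← hu]; simp [mul_assoc]
    _ = 0 := by rw [h2, zero_mul]









section ringA
variable {A : Type u} [CommRing A]

/-- von Neumann regularity: in a reduced ring with DCC on principal ideals,
every element satisfies `a = t * a ^ 2`. -/
lemma vnr (hdcc : DCC A) (hred : ∀ x : A, (∃ n, x ^ n = 0) → x = 0) (a : A) :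
    ∃ t, a = t * a ^ 2 := by
  obtain ⟨n, hn⟩ := hdcc (fun n => a ^ n) (fun n => by
    rw [Ideal.span_singleton_le_span_singleton]
    show a ^ n ∣ a ^ (n + 1)
    exact ⟨a, pow_succ a n⟩)
  have h1 : a ^ n ∈ Ideal.span {a ^ (n + 1)} := by
    rw [hn (n + 1) (by omega)]
    exact Ideal.subset_span rfl
  obtain ⟨t, ht⟩ := Ideal.mem_span_singleton'.mp h1
  have h2 : (1 - t * a) * a ^ n = 0 := by
    rw [pow_succ] at ht
    linear_combination -ht
  have h3 : ((1 - t * a) * a) ^ (n + 1) = 0 := by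
    have : ((1 - t * a) * a) ^ (n + 1) = (1 - t * a) ^ n * a * ((1 - t * a) * a ^ n) := by
      rw [mul_pow, pow_succ, pow_succ]
      ring
    rw [this, h2, mul_zero]
  have h4 : (1 - t * a) * a = 0 := hred _ ⟨n + 1, h3⟩
  exact ⟨t, by linear_combination h4⟩

/-- no strictly descending chains of idempotents -/
lemma idem_chain (hdcc : DCC A) (e : ℕ → A) (hidem : ∀ n, IsIdempotentElem (e n))
    (hle : ∀ n, e (n + 1) * e n = e (n + 1)) : ∃ n, e (n + 1) = e n := by
  by_contra hcon
  push_neg at hcon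
  obtain ⟨n, hn⟩ := hdcc e (fun n => by
    rw [Ideal.span_singleton_le_span_singleton]
    exact ⟨e (n + 1), by rw [mul_comm, hle]⟩)
  apply hcon n
  have h1 : e n ∈ Ideal.span {e (n + 1)} := by
    rw [hn (n + 1) (by omega)]
    exact Ideal.subset_span rfl
  obtain ⟨t, ht⟩ := Ideal.mem_span_singleton'.mp h1
  have h2 : e n * e (n + 1) = e n := by
    rw [← ht, mul_assoc, hidem (n + 1)]
  rw [← h2, mul_comm, hle]

/-- a primitive idempotent -/
def Primitive (e : A) : Prop :=
  e ≠ 0 ∧ ∀ f, IsIdempotentElem f → f * e = f → f = 0 ∨ f = e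

/-- decomposability into finitely many orthogonal primitive idempotents -/
def Good (e : A) : Prop :=
  ∃ t : Finset A, (∀ x ∈ t, IsIdempotentElem x ∧ Primitive x) ∧
    (∀ x ∈ t, ∀ y ∈ t, x ≠ y → x * y = 0) ∧ ∑ x ∈ t, x = e

lemma good_zero : Good (0 : A) := ⟨∅, by simp, by simp, by simp⟩

lemma good_add {f g : A} (hf : Good f) (hg : Good g) (ho : f * g = 0) : Good (f + g) := by
  classical
  obtain ⟨t1, h1, h2, h3⟩ := hf
  obtain ⟨t2, h4, h5, h6⟩ := hg
  have hsub1 : ∀ x ∈ t1, x * f = x := by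
    intro x hx
    rw [← h3, Finset.mul_sum]
    rw [Finset.sum_eq_single x]
    · exact (h1 x hx).1
    · intro y hy hxy
      exact h2 x hx y hy (Ne.symm hxy)
    · intro h
      exact absurd hx h
  have hsub2 : ∀ x ∈ t2, x * g = x := by
    intro x hx
    rw [← h6, Finset.mul_sum]
    rw [Finset.sum_eq_single x]
    · exact (h4 x hx).1
    · intro y hy hxy
      exact h5 x hx y hy (Ne.symm hxy)
    · intro h
      exact absurd hx h
  have hcross : ∀ x ∈ t1, ∀ y ∈ t2, x * y = 0 := by
    intro x hx y hy
    have : x * y = (x * f) * (y * g) := by rw [hsub1 x hx, hsub2 y hy]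
    rw [this]
    calc x * f * (y * g) = x * y * (f * g) := by ring
      _ = 0 := by rw [ho, mul_zero]
  have hdisj : Disjoint t1 t2 := by
    rw [Finset.disjoint_left]
    intro x hx1 hx2
    have h0 : x * x = 0 := hcross x hx1 x hx2
    have : x = 0 := by rw [← (h1 x hx1).1, h0]
    exact (h1 x hx1).2.1 this
  refine ⟨t1 ∪ t2, ?_, ?_, ?_⟩
  · intro x hx
    rcases Finset.mem_union.mp hx with h | h
    · exact h1 x h
    · exact h4 x h
  · intro x hx y hy hxy
    rcases Finset.mem_union.mp hx with hx' | hx' <;>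
      rcases Finset.mem_union.mp hy with hy' | hy'
    · exact h2 x hx' y hy' hxy
    · exact hcross x hx' y hy'
    · rw [mul_comm]; exact hcross y hy' x hx'
    · exact h5 x hx' y hy' hxy
  · rw [Finset.sum_union hdisj, h3, h6]

/-- every idempotent is a sum of orthogonal primitive idempotents -/
lemma all_good (hdcc : DCC A) : ∀ e : A, IsIdempotentElem e → Good e := by
  by_contra hcon
  push_neg at hcon
  -- a bad idempotent has a strictly smaller bad idempotent below it
  have hstep : ∀ e : A, IsIdempotentElem e → ¬ Good e →
      ∃ f, IsIdempotentElem f ∧ ¬ Good f ∧ f * e = f ∧ f ≠ e := by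
    intro e he hbad
    have hne : e ≠ 0 := fun h => hbad (h ▸ good_zero)
    have hnp : ¬ Primitive e := by
      intro hp
      exact hbad ⟨{e}, by simp [he, hp], by simp, by simp⟩
    rw [Primitive, not_and_or] at hnp
    rcases hnp with h | h
    · exact absurd hne (by simpa using h)
    push_neg at h
    obtain ⟨f, hfi, hfe, hf0, hfne⟩ := h
    set g := e - f with hg
    have hgi : IsIdempotentElem g := by
      rw [IsIdempotentElem, hg]
      have := he
      rw [IsIdempotentElem] at this hfi
      calc (e - f) * (e - f) = e * e - 2 * (f * e) + f * f := by ring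
        _ = e - 2 * f + f := by rw [this, hfi, hfe]
        _ = e - f := by ring
    have hge : g * e = g := by
      rw [hg]
      have := he
      rw [IsIdempotentElem] at this
      calc (e - f) * e = e * e - f * e := by ring
        _ = e - f := by rw [this, hfe]
    have hfg : f * g = 0 := by
      rw [hg]
      have := hfi
      rw [IsIdempotentElem] at this
      calc f * (e - f) = f * e - f * f := by ring
        _ = 0 := by rw [hfe, this, sub_self]
    by_cases hGf : Good f
    · by_cases hGg : Good g
      · exact absurd (by have := good_add hGf hGg hfg; rwa [hg, add_sub_cancel] at this) hbad
      · refine ⟨g, hgi, hGg, hge, fun hgeq => ?_⟩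
        apply hf0
        have h5 : e - f = e := by rw [← hg]; exact hgeq
        linear_combination -h5
    · exact ⟨f, hfi, hGf, hfe, hfne⟩
  obtain ⟨e0, he0, hbad0⟩ := hcon
  choose F hF1 hF2 hF3 hF4 using hstep
  let seq : ℕ → {p : A // IsIdempotentElem p ∧ ¬ Good p} := fun n =>
    Nat.rec ⟨e0, he0, hbad0⟩ (fun _ p => ⟨F p.1 p.2.1 p.2.2, hF1 _ _ _, hF2 _ _ _⟩) n
  have hseq : ∀ n, (seq (n + 1)).1 = F (seq n).1 (seq n).2.1 (seq n).2.2 := fun n => rfl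
  obtain ⟨n, hn⟩ := idem_chain hdcc (fun n => (seq n).1) (fun n => (seq n).2.1)
    (fun n => by show (seq (n+1)).1 * (seq n).1 = (seq (n+1)).1; rw [hseq]; exact hF3 _ _ _)
  exact hF4 (seq n).1 (seq n).2.1 (seq n).2.2 (by rw [← hseq]; exact hn)

/-- primitive idempotents give "local" behaviour -/
lemma primitive_field (hdcc : DCC A) (hred : ∀ x : A, (∃ n, x ^ n = 0) → x = 0)
    {e : A} (he : IsIdempotentElem e) (hp : Primitive e) (a : A) :
    a * e = 0 ∨ ∃ b, a * b * e = e := by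
  obtain ⟨r, hr⟩ := vnr hdcc hred (a * e)
  set c := a * e with hc
  set e' := r * c with he'
  have he'i : IsIdempotentElem e' := by
    rw [IsIdempotentElem, he']
    calc r * c * (r * c) = r * (r * c ^ 2) := by ring
      _ = r * c := by rw [← hr]
  have he'e : e' * e = e' := by
    rw [he', hc]
    have := he
    rw [IsIdempotentElem] at this
    calc r * (a * e) * e = r * a * (e * e) := by ring
      _ = r * (a * e) := by rw [this]; ring
  rcases hp.2 e' he'i he'e with h | h
  · left
    calc a * e = c := rfl
      _ = r * c ^ 2 := hr
      _ = e' * c := by rw [he']; ring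
      _ = 0 := by rw [h, zero_mul]
  · right
    refine ⟨r, ?_⟩
    calc a * r * e = e' := by rw [he', hc]; ring
      _ = e := h

end ringA

section liftsec
variable {R : Type u} [CommRing R]

lemma one_sub_idem {E : R} (hE : IsIdempotentElem E) : IsIdempotentElem (1 - E) := by
  rw [IsIdempotentElem] at hE ⊢
  linear_combination hE

lemma idem_pow_eq {z : R} (hz : IsIdempotentElem z) (m : ℕ) : z ^ (m + 1) = z := by
  induction m with
  | zero => exact pow_one z
  | succ m ih => rw [pow_succ, ih, hz]

lemma idem_nilpotent_eq_zero {z : R} (hz : IsIdempotentElem z) (hn : ∃ n, z ^ n = 0) :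
    z = 0 := by
  obtain ⟨n, hn⟩ := hn
  cases n with
  | zero =>
    have h1 : (1 : R) = 0 := by rw [← pow_zero z, hn]
    calc z = z * 1 := by ring
      _ = 0 := by rw [h1, mul_zero]
  | succ n => rw [← idem_pow_eq hz n, hn]

lemma sum_mul_self {k : ℕ} (er : Fin k → R) (h1 : ∀ i, IsIdempotentElem (er i))
    (h2 : ∀ i j, i ≠ j → er i * er j = 0) (i : Fin k) : (∑ j, er j) * er i = er i := by
  rw [Finset.sum_mul]
  rw [Finset.sum_eq_single i (fun j _ hj => h2 j i hj) (by simp)]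
  exact h1 i

lemma sum_orth_idem {k : ℕ} (er : Fin k → R) (h1 : ∀ i, IsIdempotentElem (er i))
    (h2 : ∀ i j, i ≠ j → er i * er j = 0) : IsIdempotentElem (∑ i, er i) := by
  rw [IsIdempotentElem, Finset.mul_sum]
  exact Finset.sum_congr rfl fun i _ => sum_mul_self er h1 h2 i

/-- lifting a single idempotent along the (nil) Jacobson radical -/
lemma lift_idem (hdcc : DCC R) (x : R)
    (hx : IsIdempotentElem (Ideal.Quotient.mk (Ideal.jacobson (⊥ : Ideal R)) x)) :
    ∃ e, IsIdempotentElem e ∧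
      Ideal.Quotient.mk (Ideal.jacobson (⊥ : Ideal R)) e
        = Ideal.Quotient.mk (Ideal.jacobson (⊥ : Ideal R)) x := by
  set J := Ideal.jacobson (⊥ : Ideal R) with hJ
  set mk := Ideal.Quotient.mk J with hmk
  have hu : x ^ 2 - x ∈ J := by
    rw [← Ideal.Quotient.eq_zero_iff_mem]
    show mk (x ^ 2 - x) = 0
    rw [map_sub, map_pow, sq, hx, sub_self]
  set u := x ^ 2 - x with hudef
  obtain ⟨m0, hm0⟩ := jac_nil hdcc hu
  set y : ℕ → R := fun j => Nat.rec x (fun _ yj => 3 * yj ^ 2 - 2 * yj ^ 3) j with hy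
  have hyrec : ∀ j, y (j + 1) = 3 * (y j) ^ 2 - 2 * (y j) ^ 3 := fun j => rfl
  have hinv : ∀ j, mk (y j) = mk x ∧ (y j) ^ 2 - y j ∈ Ideal.span {u ^ (2 ^ j)} := by
    intro j
    induction j with
    | zero =>
      refine ⟨rfl, ?_⟩
      show x ^ 2 - x ∈ Ideal.span {u ^ 2 ^ 0}
      rw [pow_zero, pow_one]
      exact Ideal.subset_span rfl
    | succ j ih =>
      obtain ⟨ih1, ih2⟩ := ih
      obtain ⟨s, hs⟩ := Ideal.mem_span_singleton'.mp ih2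
      constructor
      · have hmem : y (j + 1) - y j ∈ J := by
          have heq : y (j + 1) - y j = -(2 * y j - 1) * ((y j) ^ 2 - y j) := by
            rw [hyrec]; ring
          rw [heq, ← hs]
          have hup : u ^ 2 ^ j ∈ J := by
            have h2j : 2 ^ j = (2 ^ j - 1) + 1 := by
              have := Nat.one_le_two_pow (n := j)
              omega
            rw [h2j, pow_succ]
            exact Ideal.mul_mem_left _ _ hu
          exact Ideal.mul_mem_left _ _ (Ideal.mul_mem_left _ _ hup)
        have : mk (y (j + 1) - y j) = 0 := Ideal.Quotient.eq_zero_iff_mem.mpr hmem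
        rw [map_sub, sub_eq_zero] at this
        rw [this, ih1]
      · refine Ideal.mem_span_singleton'.mpr ⟨s ^ 2 * (4 * ((y j) ^ 2 - y j) - 3), ?_⟩
        have key : (y (j + 1)) ^ 2 - y (j + 1)
            = ((y j) ^ 2 - y j) ^ 2 * (4 * ((y j) ^ 2 - y j) - 3) := by
          rw [hyrec]; ring
        rw [key, ← hs]
        have h2pow : u ^ 2 ^ (j + 1) = u ^ 2 ^ j * u ^ 2 ^ j := by
          rw [← pow_add]
          congr 1
          omega
        rw [h2pow]
        ring
  refine ⟨y m0, ?_, (hinv m0).1⟩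
  have h0 : u ^ 2 ^ m0 = 0 := by
    have h2m : 2 ^ m0 = m0 + (2 ^ m0 - m0) := by
      have := Nat.lt_two_pow_self (n := m0)
      omega
    rw [h2m, pow_add, hm0, zero_mul]
  have := (hinv m0).2
  rw [h0] at this
  have hz : (y m0) ^ 2 - y m0 = 0 := by
    obtain ⟨s, hs⟩ := Ideal.mem_span_singleton'.mp this
    rw [← hs, mul_zero]
  rw [IsIdempotentElem, ← sq]
  linear_combination hz

/-- lifting a finite orthogonal family of idempotents -/
lemma lift_family (hdcc : DCC R) :
    ∀ (k : ℕ) (v : Fin k → R ⧸ Ideal.jacobson (⊥ : Ideal R)),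
    (∀ i, IsIdempotentElem (v i)) → (∀ i j, i ≠ j → v i * v j = 0) →
    ∃ er : Fin k → R, (∀ i, IsIdempotentElem (er i)) ∧
      (∀ i j, i ≠ j → er i * er j = 0) ∧
      ∀ i, Ideal.Quotient.mk (Ideal.jacobson (⊥ : Ideal R)) (er i) = v i := by
  intro k
  induction k with
  | zero => exact fun v _ _ => ⟨fun i => 0, fun i => i.elim0, fun i => i.elim0, fun i => i.elim0⟩
  | succ k ih =>
    intro v hvi hvo
    obtain ⟨er', h1, h2, h3⟩ := ih (v ∘ Fin.castSucc) (fun i => hvi _)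
      (fun i j hij => hvo _ _ (fun h => hij (Fin.castSucc_injective _ h)))
    obtain ⟨x, hxmk⟩ := Ideal.Quotient.mk_surjective (v (Fin.last k))
    have hxid : IsIdempotentElem (Ideal.Quotient.mk (Ideal.jacobson (⊥ : Ideal R)) x) := by
      rw [hxmk]; exact hvi _
    obtain ⟨g, hgid, hgmk⟩ := lift_idem hdcc x hxid
    set E := ∑ i, er' i with hE
    have hEid : IsIdempotentElem E := sum_orth_idem er' h1 h2
    set g' := g * (1 - E) with hg'
    have hg'id : IsIdempotentElem g' := by
      rw [IsIdempotentElem, hg']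
      have h4 := one_sub_idem hEid
      rw [IsIdempotentElem] at hgid h4
      calc g * (1 - E) * (g * (1 - E)) = (g * g) * ((1 - E) * (1 - E)) := by ring
        _ = g * (1 - E) := by rw [hgid, h4]
    have hg'o : ∀ i, g' * er' i = 0 := by
      intro i
      rw [hg']
      calc g * (1 - E) * er' i = g * (er' i - E * er' i) := by ring
        _ = 0 := by rw [sum_mul_self er' h1 h2 i, sub_self, mul_zero]
    have hg'mk : Ideal.Quotient.mk (Ideal.jacobson (⊥ : Ideal R)) g' = v (Fin.last k) := by
      rw [hg', map_mul, map_sub, map_one, hgmk, hxmk, hE, map_sum]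
      have : ∀ i : Fin k, Ideal.Quotient.mk (Ideal.jacobson (⊥ : Ideal R)) (er' i)
          = v (Fin.castSucc i) := h3
      rw [Finset.sum_congr rfl (fun i _ => this i), mul_sub, mul_one, Finset.mul_sum]
      have hzero : ∀ i : Fin k, v (Fin.last k) * v (Fin.castSucc i) = 0 := by
        intro i
        exact hvo _ _ (fun h => by
          have := (Fin.castSucc_lt_last i).ne'
          exact this h)
      rw [Finset.sum_congr rfl (fun i _ => hzero i), Finset.sum_const_zero, sub_zero]
    refine ⟨Fin.snoc er' g', ?_, ?_, ?_⟩
    · intro i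
      refine Fin.lastCases ?_ ?_ i
      · rw [Fin.snoc_last]; exact hg'id
      · intro j; rw [Fin.snoc_castSucc]; exact h1 j
    · intro i j hij
      rcases Fin.eq_castSucc_or_eq_last i with ⟨i', rfl⟩ | rfl <;>
        rcases Fin.eq_castSucc_or_eq_last j with ⟨j', rfl⟩ | rfl
      · rw [Fin.snoc_castSucc, Fin.snoc_castSucc]
        exact h2 i' j' (fun h => hij (by rw [h]))
      · rw [Fin.snoc_last, Fin.snoc_castSucc, mul_comm]
        exact hg'o i'
      · rw [Fin.snoc_last, Fin.snoc_castSucc]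
        exact hg'o j'
      · exact absurd rfl hij
    · intro i
      refine Fin.lastCases ?_ ?_ i
      · rw [Fin.snoc_last]; exact hg'mk
      · intro j; rw [Fin.snoc_castSucc]; exact h3 j

end liftsec

section structsec
variable {R : Type u} [CommRing R]

/-- The structure theorem: a commutative ring with DCC on principal ideals is,
up to its Jacobson radical, a finite product of fields, witnessed by a complete
family of orthogonal idempotents with "local" behaviour. -/
theorem structure_R (hdcc : DCC R) : ∃ (k : ℕ) (e : Fin k → R),
    (∀ i, IsIdempotentElem (e i)) ∧ (∀ i j, i ≠ j → e i * e j = 0) ∧ (∑ i, e i = 1) ∧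
    (∀ (i : Fin k) (a : R),
      a * e i ∈ Ideal.jacobson (⊥ : Ideal R) ∨ ∃ b, a * b * e i = e i) := by
  classical
  set J := Ideal.jacobson (⊥ : Ideal R) with hJ
  have hdccS : DCC (R ⧸ J) := dcc_quotient J hdcc
  have hredS : ∀ x : R ⧸ J, (∃ n, x ^ n = 0) → x = 0 := by
    rintro x ⟨n, hn⟩
    obtain ⟨a, rfl⟩ := Ideal.Quotient.mk_surjective x
    rw [← map_pow, Ideal.Quotient.eq_zero_iff_mem] at hn
    rw [Ideal.Quotient.eq_zero_iff_mem]
    exact Ideal.isRadical_jacobson (⊥ : Ideal R) ⟨n, hn⟩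
  have hone : IsIdempotentElem (1 : R ⧸ J) := by rw [IsIdempotentElem, mul_one]
  obtain ⟨t, ht1, ht2, ht3⟩ := all_good hdccS 1 hone
  -- index the finset
  set k := Fintype.card ↥t with hk
  set σ := Fintype.equivFin ↥t with hσ
  set v : Fin k → R ⧸ J := fun i => ↑(σ.symm i) with hv
  have hvmem : ∀ i, (v i : R ⧸ J) ∈ t := fun i => (σ.symm i).2
  have hvinj : Function.Injective v := by
    intro i j hij
    have : σ.symm i = σ.symm j := Subtype.ext hij
    simpa using congrArg σ this
  have hvidem : ∀ i, IsIdempotentElem (v i) := fun i => (ht1 _ (hvmem i)).1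
  have hvprim : ∀ i, Primitive (v i) := fun i => (ht1 _ (hvmem i)).2
  have hvorth : ∀ i j, i ≠ j → v i * v j = 0 :=
    fun i j hij => ht2 _ (hvmem i) _ (hvmem j) (fun h => hij (hvinj h))
  have hvsum : ∑ i, v i = 1 := by
    rw [← ht3, ← Finset.sum_coe_sort t (fun x => (x : R ⧸ J))]
    exact Equiv.sum_comp σ.symm (fun b => (b : R ⧸ J))
  obtain ⟨e, he1, he2, he3⟩ := lift_family hdcc k v hvidem hvorth
  have he3' : ∀ i, Ideal.Quotient.mk J (e i) = v i := he3
  have hEsum : ∑ i, e i = 1 := by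
    set E := ∑ i, e i with hE
    have hEid : IsIdempotentElem E := sum_orth_idem e he1 he2
    have h1E : (1 - E) ∈ J := by
      rw [← Ideal.Quotient.eq_zero_iff_mem, map_sub, map_one, hE, map_sum]
      rw [Finset.sum_congr rfl (fun i _ => he3 i), hvsum, sub_self]
    have : 1 - E = 0 :=
      idem_nilpotent_eq_zero (one_sub_idem hEid) (jac_nil hdcc h1E)
    linear_combination -this
  refine ⟨k, e, he1, he2, hEsum, ?_⟩
  intro i a
  rcases primitive_field hdccS hredS (hvidem i) (hvprim i) (Ideal.Quotient.mk J a) with h | h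
  · left
    rw [← Ideal.Quotient.eq_zero_iff_mem, map_mul, he3' i]
    exact h
  · right
    obtain ⟨bb, hbb⟩ := h
    obtain ⟨b, rfl⟩ := Ideal.Quotient.mk_surjective bb
    have hjmem : a * b * e i - e i ∈ J := by
      rw [← Ideal.Quotient.eq_zero_iff_mem, map_sub, map_mul, map_mul, he3' i, sub_eq_zero]
      exact hbb
    set j := a * b * e i - e i with hjdef
    have hje : j * e i = j := by
      have := he1 i
      rw [IsIdempotentElem] at this
      rw [hjdef]
      calc (a * b * e i - e i) * e i = a * b * (e i * e i) - e i * e i := by ring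
        _ = a * b * e i - e i := by rw [this]
    have habe : a * b * e i = (1 + j) * e i := by
      rw [hjdef]
      calc a * b * e i = e i + (a * b * e i - e i) * e i := by rw [hje]; ring
        _ = (1 + (a * b * e i - e i)) * e i := by ring
    have hunit : IsUnit (1 + j) := by
      have : IsNilpotent j := jac_nil hdcc hjmem
      exact this.isUnit_one_add
    obtain ⟨u, hu⟩ := hunit
    refine ⟨b * ↑u⁻¹, ?_⟩
    calc a * (b * ↑u⁻¹) * e i = ↑u⁻¹ * (a * b * e i) := by ring
      _ = ↑u⁻¹ * ((1 + j) * e i) := by rw [habe]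
      _ = (↑u⁻¹ * ↑u) * e i := by rw [hu]; ring
      _ = e i := by rw [Units.inv_mul, one_mul]
end structsec

theorem nakayama_sup {M : Type u} [AddCommGroup M] [Module R M] (J : Ideal R)
    (hT : ∀ a : ℕ → R, (∀ n, a n ∈ J) → ∃ n, prodSeq a n = 0)
    (N : Submodule R M) (h : N ⊔ J • ⊤ = ⊤) : N = ⊤ := by
  have hq : (⊤ : Submodule R (M ⧸ N)) ≤ J • ⊤ := by
    have hmap := congrArg (Submodule.map N.mkQ) h
    rw [Submodule.map_sup, Submodule.map_smul'', Submodule.map_top, Submodule.range_mkQ] at hmap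
    have hN : Submodule.map N.mkQ N = ⊥ := by
      rw [eq_bot_iff]
      rintro y ⟨x, hx, rfl⟩
      simpa [Submodule.Quotient.mk_eq_zero] using hx
    rw [hN, bot_sup_eq] at hmap
    rw [hmap]
  rw [eq_top_iff]
  intro x _
  have h0 := nakayama_tnilp J hT hq (N.mkQ x)
  rwa [Submodule.mkQ_apply, Submodule.Quotient.mk_eq_zero] at h0

set_option maxHeartbeats 1000000 in
/-- a maximal independent family exists and gives a projective cover -/
theorem dcc_to_cover (hdcc : DCC R) (M : Type u) [AddCommGroup M] [Module R M] :
    ∃ (P : Type u) (_ : AddCommGroup P) (_ : Module R P) (f : P →ₗ[R] M),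
      Module.Projective R P ∧ Function.Surjective f ∧
        ∀ N : Submodule R P, N ⊔ LinearMap.ker f = ⊤ → N = ⊤ := by
  classical
  obtain ⟨k, e, he1, he2, he3, he4⟩ := structure_R hdcc
  have hT := tnilp hdcc
  -- the independence predicate on subsets of M × Fin k
  let Fam : Set (M × Fin k) → Prop := fun A =>
    ∀ v : (M × Fin k) →₀ R, ↑v.support ⊆ A →
      (v.sum fun p r => r • (e p.2 • p.1)) ∈
        Ideal.jacobson (⊥ : Ideal R) • (⊤ : Submodule R M) →
      ∀ p, v p * e p.2 ∈ Ideal.jacobson (⊥ : Ideal R)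
  -- Zorn's lemma
  have hzorn : ∃ A, Maximal (· ∈ {A | Fam A}) A := by
    apply zorn_subset
    intro c hc hchain
    refine ⟨⋃₀ c, ?_, fun s hs => Set.subset_sUnion_of_mem hs⟩
    intro v hsupp hsum p
    rcases Set.eq_empty_or_nonempty c with rfl | hne
    · rw [Set.sUnion_empty, Set.subset_empty_iff, Finset.coe_eq_empty,
        Finsupp.support_eq_empty] at hsupp
      rw [hsupp]
      simpa using Ideal.zero_mem _
    · have hfind : ∀ s : Finset (M × Fin k), ↑s ⊆ ⋃₀ c → ∃ B ∈ c, ↑s ⊆ B := by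
        intro s
        induction s using Finset.induction with
        | empty =>
          intro _
          obtain ⟨B, hB⟩ := hne
          exact ⟨B, hB, by simp⟩
        | @insert a s ha ih =>
          intro hs
          have h1 : ↑s ⊆ ⋃₀ c := by
            refine Set.Subset.trans ?_ hs
            simp [Finset.coe_insert, Set.subset_insert]
          obtain ⟨B₁, hB₁c, hB₁⟩ := ih h1
          have h2 : a ∈ ⋃₀ c := hs (by simp)
          obtain ⟨B₂, hB₂c, hB₂⟩ := h2
          rcases eq_or_ne B₁ B₂ with rfl | hBne
          · exact ⟨B₁, hB₁c, by rw [Finset.coe_insert]; exact Set.insert_subset hB₂ hB₁⟩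
          · rcases hchain hB₁c hB₂c hBne with h | h
            · exact ⟨B₂, hB₂c, by
                rw [Finset.coe_insert]
                exact Set.insert_subset hB₂ (hB₁.trans h)⟩
            · exact ⟨B₁, hB₁c, by
                rw [Finset.coe_insert]
                exact Set.insert_subset (h hB₂) hB₁⟩
      obtain ⟨B, hBc, hB⟩ := hfind v.support hsupp
      exact hc hBc v hB hsum p
  obtain ⟨A, hA⟩ := hzorn
  have hAfam : Fam A := hA.1
  -- the span property
  have hW : Submodule.span R ((fun p : M × Fin k => e p.2 • p.1) '' A)
      ⊔ Ideal.jacobson (⊥ : Ideal R) • (⊤ : Submodule R M) = ⊤ := by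
    rw [eq_top_iff]
    intro y _
    have hy : ∀ i : Fin k, e i • y ∈ Submodule.span R ((fun p : M × Fin k => e p.2 • p.1) '' A)
        ⊔ Ideal.jacobson (⊥ : Ideal R) • (⊤ : Submodule R M) := by
      intro i
      by_contra hnot
      have hyiA : (y, i) ∉ A := fun hmem =>
        hnot (Submodule.mem_sup_left (Submodule.subset_span ⟨(y, i), hmem, rfl⟩))
      have hins : Fam (insert (y, i) A) := by
        intro v hsupp hsum p
        set c₀ := v (y, i) with hc₀
        set v' := v.erase (y, i) with hv'
        have hv'supp : ↑v'.support ⊆ A := by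
          intro q hq
          rw [hv'] at hq
          simp only [Finset.mem_coe, Finsupp.support_erase, Finset.mem_erase] at hq
          have := hsupp (Finset.mem_coe.mpr hq.2)
          rcases Set.mem_insert_iff.mp this with h | h
          · exact absurd h hq.1
          · exact h
        have hsplit : v' + Finsupp.single (y, i) c₀ = v := Finsupp.erase_add_single _ _
        have hsum' : (v.sum fun p r => r • (e p.2 • p.1))
            = (v'.sum fun p r => r • (e p.2 • p.1)) + c₀ • (e i • y) := by
          rw [← hsplit, Finsupp.sum_add_index' (by intro q; rw [zero_smul])
            (by intro q r1 r2; rw [add_smul]), Finsupp.sum_single_index (by rw [zero_smul])]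
        have hv'span : (v'.sum fun p r => r • (e p.2 • p.1)) ∈
            Submodule.span R ((fun p : M × Fin k => e p.2 • p.1) '' A) := by
          refine Submodule.sum_mem _ fun q hq => ?_
          exact Submodule.smul_mem _ _ (Submodule.subset_span ⟨q, hv'supp hq, rfl⟩)
        by_cases hc : c₀ * e i ∈ Ideal.jacobson (⊥ : Ideal R)
        · have hmem : c₀ • (e i • y) ∈ Ideal.jacobson (⊥ : Ideal R) • (⊤ : Submodule R M) := by
            rw [smul_smul]
            exact Submodule.smul_mem_smul hc trivial
          have hv'sum : (v'.sum fun p r => r • (e p.2 • p.1)) ∈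
              Ideal.jacobson (⊥ : Ideal R) • (⊤ : Submodule R M) := by
            have h5 : (v'.sum fun p r => r • (e p.2 • p.1))
                = (v.sum fun p r => r • (e p.2 • p.1)) - c₀ • (e i • y) := by
              rw [hsum']; abel
            rw [h5]
            exact Submodule.sub_mem _ hsum hmem
          have hall := hAfam v' hv'supp hv'sum
          rcases eq_or_ne p (y, i) with rfl | hne
          · rwa [← hc₀]
          · have : v' p = v p := Finsupp.erase_ne hne
            rw [← this]
            exact hall p
        · rcases he4 i c₀ with h | h
          · exact absurd h hc
          obtain ⟨b, hb⟩ := h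
          exfalso
          apply hnot
          have h1 : c₀ • (e i • y) ∈ Submodule.span R ((fun p : M × Fin k => e p.2 • p.1) '' A)
              ⊔ Ideal.jacobson (⊥ : Ideal R) • (⊤ : Submodule R M) := by
            have h5 : c₀ • (e i • y) = (v.sum fun p r => r • (e p.2 • p.1))
                - (v'.sum fun p r => r • (e p.2 • p.1)) := by
              rw [hsum']; abel
            rw [h5]
            exact Submodule.sub_mem _ (Submodule.mem_sup_right hsum)
              (Submodule.mem_sup_left hv'span)
          have h2 : e i • y = b • (c₀ • (e i • y)) := by
            rw [smul_smul, smul_smul,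
              show b * c₀ * e i = c₀ * b * e i from by ring, hb]
          rw [h2]
          exact Submodule.smul_mem _ _ h1
      have heq : insert (y, i) A = A :=
        le_antisymm (hA.2 hins (Set.subset_insert _ _)) (Set.subset_insert _ _)
      exact hyiA (heq ▸ Set.mem_insert _ _)
    have hdecomp : y = ∑ i, e i • y := by
      rw [← Finset.sum_smul, he3, one_smul]
    rw [hdecomp]
    exact Submodule.sum_mem _ fun i _ => hy i
  -- Build the projective cover
  set χ : ↥A → M := fun b => e (b.1.2) • b.1.1 with hχ
  set ψ : (↥A →₀ R) →ₗ[R] (↥A →₀ R) :=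
    Finsupp.lsum ℕ (fun b => LinearMap.toSpanSingleton R (↥A →₀ R)
      (Finsupp.single b (e b.1.2))) with hψ
  have hψs : ∀ (b : ↥A) (r : R), ψ (Finsupp.single b r) = Finsupp.single b (r * e b.1.2) := by
    intro b r
    rw [hψ, Finsupp.lsum_single]
    show r • Finsupp.single b (e b.1.2) = _
    rw [Finsupp.smul_single, smul_eq_mul]
  have happly : ∀ (w : ↥A →₀ R) (b : ↥A), (ψ w) b = w b * e b.1.2 := by
    intro w b
    induction w using Finsupp.induction_linear with
    | zero => simp
    | add u v hu hv =>
      rw [map_add, Finsupp.add_apply, hu, hv, Finsupp.add_apply, add_mul]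
    | single a r =>
      rw [hψs]
      rcases eq_or_ne a b with rfl | hne
      · rw [Finsupp.single_eq_same, Finsupp.single_eq_same]
      · rw [Finsupp.single_eq_of_ne hne.symm, Finsupp.single_eq_of_ne hne.symm, zero_mul]
  have hψidem : ∀ w, ψ (ψ w) = ψ w := by
    intro w
    ext b
    rw [happly, happly, mul_assoc, he1 b.1.2]
  set Pty : Submodule R (↥A →₀ R) := LinearMap.range ψ with hPty
  have hstab : ∀ v ∈ Pty, ∀ b : ↥A, v b * e b.1.2 = v b := by
    rintro v ⟨w, rfl⟩ b
    rw [happly, mul_assoc, he1 b.1.2]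
  have hfix : ∀ v ∈ Pty, ψ v = v := by
    rintro v ⟨w, rfl⟩
    exact hψidem w
  set sP : (↥A →₀ R) →ₗ[R] ↥Pty := LinearMap.codRestrict Pty ψ (fun v => ⟨v, rfl⟩) with hsP
  have hsplit : sP ∘ₗ Pty.subtype = LinearMap.id := by
    refine LinearMap.ext fun v => Subtype.ext ?_
    show ψ ↑v = ↑v
    exact hfix v v.2
  have hProjP : Module.Projective R ↥Pty := Module.Projective.of_split Pty.subtype sP hsplit
  set f : ↥Pty →ₗ[R] M := (Finsupp.linearCombination R χ) ∘ₗ Pty.subtype with hf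
  -- surjectivity
  have hχmem : ∀ b : ↥A, χ b ∈ LinearMap.range f := by
    intro b
    refine ⟨⟨ψ (Finsupp.single b 1), ⟨_, rfl⟩⟩, ?_⟩
    show Finsupp.linearCombination R χ (ψ (Finsupp.single b 1)) = χ b
    rw [hψs, one_mul, Finsupp.linearCombination_single, hχ]
    show e b.1.2 • (e b.1.2 • b.1.1) = e b.1.2 • b.1.1
    rw [smul_smul, he1 b.1.2]
  have hrange : LinearMap.range f = ⊤ := by
    apply nakayama_sup (Ideal.jacobson (⊥ : Ideal R)) hT
    have hle : Submodule.span R ((fun p : M × Fin k => e p.2 • p.1) '' A)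
        ≤ LinearMap.range f := by
      rw [Submodule.span_le]
      rintro m ⟨p, hp, rfl⟩
      exact hχmem ⟨p, hp⟩
    have h7 := sup_le_sup_right hle (Ideal.jacobson (⊥ : Ideal R) • (⊤ : Submodule R M))
    rw [hW] at h7
    exact le_antisymm le_top h7
  have hsurj : Function.Surjective f := LinearMap.range_eq_top.mp hrange
  -- kernel contained in J • ⊤
  have hkerJ : LinearMap.ker f ≤
      Ideal.jacobson (⊥ : Ideal R) • (⊤ : Submodule R ↥Pty) := by
    rintro ⟨v, hv⟩ hker
    rw [LinearMap.mem_ker] at hker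
    have hlc : Finsupp.linearCombination R χ v = 0 := hker
    -- transfer to a finsupp on M × Fin k
    set emb : ↥A ↪ M × Fin k := ⟨Subtype.val, Subtype.val_injective⟩ with hemb
    set vh : (M × Fin k) →₀ R := Finsupp.embDomain emb v with hvh
    have hvhsupp : ↑vh.support ⊆ A := by
      intro q hq
      rw [hvh, Finsupp.support_embDomain] at hq
      simp only [Finset.mem_coe, Finset.mem_map] at hq
      obtain ⟨b, _, rfl⟩ := hq
      exact b.2
    have hvhsum : (vh.sum fun p r => r • (e p.2 • p.1)) ∈
        Ideal.jacobson (⊥ : Ideal R) • (⊤ : Submodule R M) := by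
      rw [hvh, Finsupp.sum_embDomain]
      have : (v.sum fun (b : ↥A) r => r • (e (emb b).2 • (emb b).1)) =
          Finsupp.linearCombination R χ v := by
        rw [Finsupp.linearCombination_apply]
        rfl
      rw [this, hlc]
      exact Submodule.zero_mem _
    have hcoef := hAfam vh hvhsupp hvhsum
    have hvJ : ∀ b : ↥A, v b ∈ Ideal.jacobson (⊥ : Ideal R) := by
      intro b
      have h5 := hcoef ↑b
      have h6 : vh ↑b = v b := by rw [hvh]; exact Finsupp.embDomain_apply_self _ _ _
      rw [h6] at h5
      rwa [hstab v hv b] at h5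
    -- express as a J-combination
    have pbmem : ∀ b : ↥A, Finsupp.single b (e b.1.2) ∈ Pty := by
      intro b
      exact ⟨Finsupp.single b 1, by rw [hψs, one_mul]⟩
    set pb : ↥A → ↥Pty := fun b => ⟨Finsupp.single b (e b.1.2), pbmem b⟩ with hpb
    have hdecomp : (⟨v, hv⟩ : ↥Pty) = ∑ b ∈ v.support, v b • pb b := by
      refine Subtype.ext ?_
      rw [AddSubmonoidClass.coe_finset_sum]
      have hterm : ∀ b ∈ v.support, ↑(v b • pb b) = Finsupp.single b (v b) := by
        intro b _
        show v b • Finsupp.single b (e b.1.2) = Finsupp.single b (v b)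
        rw [Finsupp.smul_single, smul_eq_mul, hstab v hv b]
      rw [Finset.sum_congr rfl hterm]
      exact (Finsupp.sum_single v).symm
    rw [hdecomp]
    exact Submodule.sum_mem _ fun b _ => Submodule.smul_mem_smul (hvJ b) trivial
  -- superfluity
  refine ⟨↥Pty, inferInstance, inferInstance, f, hProjP, hsurj, ?_⟩
  intro N hN
  apply nakayama_sup (Ideal.jacobson (⊥ : Ideal R)) hT
  have h8 := sup_le_sup_left hkerJ N
  rw [hN] at h8
  exact le_antisymm le_top h8

end Bass

/-- A commutative ring is perfect iff it satisfies the descending chain condition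
on principal ideals. -/
theorem isPerfectRing_iff_dcc_principal (R : Type u) [CommRing R] :
    IsPerfectRing R ↔
      ∀ f : ℕ → R, (∀ n, Ideal.span {f (n + 1)} ≤ Ideal.span {f n}) →
        ∃ n, ∀ m, n ≤ m → Ideal.span {f m} = Ideal.span {f n} := by
  constructor
  · intro h f hf
    exact Bass.perfect_to_dcc h f hf
  · intro h M _ _
    obtain ⟨P, i1, i2, f, h1, h2, h3⟩ := Bass.dcc_to_cover h M
    exact ⟨P, i1, i2, f, h1, h2, h3⟩
end

section
/- If R is a commutative perfect ring, then every nonzero R-module has a maximal submodule, i.e., rad(M) = ⋂{L : L maximal submodule of M} is a proper submodule of M for every nonzero M. -/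
universe u

/-- Evaluating `aeval φ g` at a fixed point of `φ` gives `g.eval 1 • v`. -/
lemma aeval_apply_fixed {R V : Type*} [CommRing R] [AddCommGroup V] [Module R V]
    (φ : Module.End R V) (v : V) (hv : φ v = v) (g : Polynomial R) :
    (Polynomial.aeval φ g) v = g.eval 1 • v := by
  have hpow : ∀ k : ℕ, (φ ^ k) v = v := by
    intro k
    induction k with
    | zero => rfl
    | succ k ih => rw [pow_succ, Module.End.mul_apply, hv, ih]
  induction g using Polynomial.induction_on' with
  | add a b ha hb => simp [ha, hb, add_smul]
  | monomial n a =>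
    rw [Polynomial.aeval_monomial, Polynomial.eval_monomial]
    simp [Module.End.mul_apply, hpow, Module.algebraMap_end_apply]

/-- Over a commutative perfect ring, every nonzero module has a maximal submodule;
equivalently its radical (the intersection of all maximal submodules, `⊤` if there
are none) is a proper submodule. -/
theorem rad_ne_top_of_perfect (R : Type u) [CommRing R] (hR : IsPerfectRing R)
    (M : Type u) [AddCommGroup M] [Module R M] (hM : Nontrivial M) :
    sInf {L : Submodule R M | IsCoatom L} ≠ ⊤ := by
  classical
  intro htop
  -- Step 1: `M` has no coatoms.
  have hcoM : ∀ L : Submodule R M, ¬IsCoatom L := by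
    intro L hL
    have h1 : sInf {L : Submodule R M | IsCoatom L} ≤ L := sInf_le hL
    rw [htop] at h1
    exact hL.1 (top_unique h1)
  -- Step 2: take a projective cover of `M`.
  obtain ⟨P, _, _, f, hproj, hsurj, hsmall⟩ := hR M ‹_› ‹_›
  -- Step 3: `P` has no coatoms either.
  have hcoP : ∀ N : Submodule R P, ¬IsCoatom N := by
    intro N hN
    have hker : LinearMap.ker f ≤ N := by
      by_contra hk
      have hlt : N < N ⊔ LinearMap.ker f :=
        lt_of_le_of_ne le_sup_left (fun h => hk (le_sup_right.trans h.ge))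
      exact hN.1 (hsmall N (hN.2 _ hlt))
    have hcm : Submodule.comap f (Submodule.map f N) = N := by
      rw [Submodule.comap_map_eq, sup_eq_left.mpr hker]
    apply hcoM (Submodule.map f N)
    constructor
    · intro h
      apply hN.1
      rw [← hcm, h, Submodule.comap_top]
    · intro L hL
      have h1 : N ≤ Submodule.comap f L := Submodule.map_le_iff_le_comap.mp hL.le
      have h2 : N ≠ Submodule.comap f L := by
        intro h
        apply hL.ne
        rw [← Submodule.map_comap_eq_of_surjective hsurj L, ← h]
      have h3 := hN.2 (Submodule.comap f L) (lt_of_le_of_ne h1 h2)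
      rw [← Submodule.map_comap_eq_of_surjective hsurj L, h3, Submodule.map_top,
        LinearMap.range_eq_top.mpr hsurj]
  -- Step 4: pick `p ≠ 0` in `P` and a maximal ideal containing its annihilator.
  obtain ⟨m, hm⟩ := exists_ne (0 : M)
  obtain ⟨p, hp⟩ := hsurj m
  have hp0 : p ≠ 0 := fun h => hm (by rw [← hp, h, map_zero])
  obtain ⟨s, hs⟩ := Module.projective_def.mp hproj
  have hA : LinearMap.ker (LinearMap.toSpanSingleton R P p) ≠ ⊤ := by
    intro h
    apply hp0
    have h1 : (1 : R) ∈ LinearMap.ker (LinearMap.toSpanSingleton R P p) := by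
      rw [h]; trivial
    simpa using h1
  obtain ⟨𝔪, h𝔪max, h𝔪A⟩ := Ideal.exists_le_maximal _ hA
  -- Step 5: all coordinates of the section `s` lie in `𝔪`.
  haveI : IsSimpleModule R (R ⧸ 𝔪) :=
    isSimpleModule_iff_isCoatom.mpr (Ideal.isMaximal_def.mp h𝔪max)
  have hcoef : ∀ q x : P, s q x ∈ 𝔪 := by
    intro q x
    by_contra hqx
    set ψ : P →ₗ[R] R ⧸ (𝔪 : Submodule R R) :=
      (𝔪 : Submodule R R).mkQ ∘ₗ (Finsupp.lapply x ∘ₗ s) with hψ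
    have hψq : ψ q ≠ 0 := by
      simpa [hψ, Submodule.Quotient.mk_eq_zero, Ideal.Quotient.eq_zero_iff_mem] using hqx
    have hψ0 : ψ ≠ 0 := fun h => hψq (by rw [h]; rfl)
    have hrange : LinearMap.range ψ = ⊤ := by
      rcases eq_bot_or_eq_top (LinearMap.range ψ) with h | h
      · exact absurd (LinearMap.range_eq_bot.mp h) hψ0
      · exact h
    exact hcoP _ (LinearMap.isCoatom_ker_of_surjective (LinearMap.range_eq_top.mp hrange))
  -- Step 6: the span of the support of `s p`, the endomorphism `e`, Cayley-Hamilton.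
  set B := (s p).support with hB
  set N' := Submodule.span R (B : Set P) with hN'
  have hxB : ∀ x ∈ B, x ∈ N' := fun x hx => Submodule.subset_span hx
  have hptot : p = ∑ x ∈ B, s p x • x := by
    conv_lhs => rw [← hs p]
    rw [Finsupp.linearCombination_apply, Finsupp.sum]
    rfl
  have hpN : p ∈ N' := by
    rw [hptot]
    exact Submodule.sum_mem _ fun x hx => Submodule.smul_mem _ _ (hxB x hx)
  set e : P →ₗ[R] P := ∑ x ∈ B, LinearMap.smulRight (Finsupp.lapply x ∘ₗ s) x with he
  have heapp : ∀ q : P, e q = ∑ x ∈ B, s q x • x := by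
    intro q
    rw [he, LinearMap.sum_apply]
    simp
  have heN : ∀ q : P, e q ∈ N' := by
    intro q
    rw [heapp]
    exact Submodule.sum_mem _ fun x hx => Submodule.smul_mem _ _ (hxB x hx)
  have hesmul : ∀ q : P, e q ∈ 𝔪 • N' := by
    intro q
    rw [heapp]
    exact Submodule.sum_mem _ fun x hx => Submodule.smul_mem_smul (hcoef q x) (hxB x hx)
  have hep : e p = p := by rw [heapp, ← hptot]
  set φ : Module.End R N' := e.restrict (fun q _ => heN q) with hφ
  haveI : Module.Finite R N' :=
    Module.Finite.iff_fg.mpr (Submodule.fg_span B.finite_toSet)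
  have hrangeφ : LinearMap.range φ ≤ 𝔪 • (⊤ : Submodule R N') := by
    rintro _ ⟨q, rfl⟩
    rw [Submodule.mem_smul_top_iff]
    exact hesmul q
  obtain ⟨χ, hmon, -, hcoeff, haeval⟩ :=
    LinearMap.exists_monic_and_coeff_mem_pow_and_aeval_eq_zero_of_range_le_smul R φ 𝔪 hrangeφ
  -- Step 7: evaluate at the fixed point `p` and derive a contradiction.
  have hφp : φ ⟨p, hpN⟩ = ⟨p, hpN⟩ := Subtype.ext (by simpa [hφ, LinearMap.restrict_apply] using hep)
  have hzero : χ.eval 1 • (⟨p, hpN⟩ : N') = 0 := by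
    rw [← aeval_apply_fixed φ _ hφp χ, haeval, LinearMap.zero_apply]
  have hup : χ.eval 1 • p = 0 := by
    have := congrArg (Submodule.subtype N') hzero
    simpa using this
  have hu𝔪 : χ.eval 1 ∈ 𝔪 :=
    h𝔪A (LinearMap.mem_ker.mpr (by simpa [LinearMap.toSpanSingleton_apply] using hup))
  have hsum : χ.eval 1 = (∑ i ∈ Finset.range χ.natDegree, χ.coeff i) + 1 := by
    rw [Polynomial.eval_eq_sum_range, Finset.sum_range_succ, hmon.coeff_natDegree]
    simp
  have hs𝔪 : (∑ i ∈ Finset.range χ.natDegree, χ.coeff i) ∈ 𝔪 := by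
    refine Ideal.sum_mem _ fun i hi => ?_
    have hne : χ.natDegree - i ≠ 0 := Nat.sub_ne_zero_of_lt (Finset.mem_range.mp hi)
    exact Ideal.pow_le_self hne (hcoeff i)
  have hone : (1 : R) ∈ 𝔪 := by
    have : (1 : R) = χ.eval 1 - ∑ i ∈ Finset.range χ.natDegree, χ.coeff i := by
      rw [hsum]; ring
    rw [this]
    exact Ideal.sub_mem _ hu𝔪 hs𝔪
  exact h𝔪max.ne_top ((Ideal.eq_top_iff_one 𝔪).mpr hone)
end

section
/- If R is a commutative perfect ring, then every nonzero R-module contains a simple submodule. -/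
universe u

section aux

variable {R : Type u} [CommRing R]

/-- Auxiliary descending recursion used in the local splitting of the Bass submodule. -/
private noncomputable def bassAux (a : ℕ → R) (y : ℕ → (ℕ →₀ R)) (N : ℕ) : ℕ → (ℕ →₀ R)
  | 0 => y N
  | (j+1) => y (N - j - 1) + a (N - j - 1) • bassAux a y N j

/-- Local splitting: every element of the Bass submodule `K = span {eₙ - aₙ eₙ₊₁}` is fixed by
an endomorphism of the free module whose range lies inside `K`. -/
private lemma bass_local_split (a : ℕ → R)
    (y : ℕ → (ℕ →₀ R)) (hy : ∀ n, y n = Finsupp.single n 1 - Finsupp.single (n+1) (a n))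
    (z : ℕ →₀ R) (hz : z ∈ Submodule.span R (Set.range y)) :
    ∃ φ : (ℕ →₀ R) →ₗ[R] (ℕ →₀ R), φ z = z ∧ ∀ v, φ v ∈ Submodule.span R (Set.range y) := by
  classical
  obtain ⟨c, hc⟩ := Finsupp.mem_span_range_iff_exists_finsupp.mp hz
  obtain ⟨N, hsupp⟩ : ∃ N, ∀ n ∈ c.support, n < N := by
    refine ⟨(c.support.sup id) + 1, fun n hn => ?_⟩
    have h1 : n ≤ c.support.sup id := Finset.le_sup (f := id) hn
    omega
  set d : ℕ → (ℕ →₀ R) := fun k => if k ≤ N then bassAux a y N (N - k) else 0 with hd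
  have huK : ∀ j, bassAux a y N j ∈ Submodule.span R (Set.range y) := by
    intro j
    induction j with
    | zero => exact Submodule.subset_span ⟨N, rfl⟩
    | succ j ih =>
        rw [bassAux]
        exact Submodule.add_mem _ (Submodule.subset_span ⟨_, rfl⟩) (Submodule.smul_mem _ _ ih)
  have hdK : ∀ k, d k ∈ Submodule.span R (Set.range y) := by
    intro k
    by_cases h : k ≤ N
    · simp only [hd, if_pos h]; exact huK _
    · simp only [hd, if_neg h]; exact Submodule.zero_mem _
  have hdrec : ∀ k ≤ N, d k = y k + a k • d (k+1) := by
    intro k hk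
    rcases eq_or_lt_of_le hk with h | h
    · have hk1 : ¬ (k+1 ≤ N) := by omega
      have hNk : N - k = 0 := by omega
      simp only [hd, if_pos hk, if_neg hk1, hNk]
      rw [bassAux, ← h]
      simp
    · have hk1 : k + 1 ≤ N := by omega
      have key : bassAux a y N (N - k) = y k + a k • bassAux a y N (N - (k+1)) := by
        obtain ⟨j, hj⟩ : ∃ j, N - k = j + 1 := ⟨N - k - 1, by omega⟩
        have hj2 : N - j - 1 = k := by omega
        have hj3 : N - (k+1) = j := by omega
        rw [hj, bassAux, hj2, hj3]
      simp only [hd, if_pos hk, if_pos hk1]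
      exact key
  refine ⟨Finsupp.lsum R (fun k => LinearMap.toSpanSingleton R _ (d k)), ?_, ?_⟩
  · set φ := (Finsupp.lsum R (fun k => LinearMap.toSpanSingleton R _ (d k)) :
      (ℕ →₀ R) →ₗ[R] (ℕ →₀ R))
    have hφy : ∀ n < N, φ (y n) = y n := by
      intro n hn
      rw [hy n, map_sub]
      have e1 : φ (Finsupp.single n 1) = d n := by
        simp [φ, Finsupp.lsum_single, LinearMap.toSpanSingleton_apply]
      have e2 : φ (Finsupp.single (n+1) (a n)) = a n • d (n+1) := by
        simp [φ, Finsupp.lsum_single, LinearMap.toSpanSingleton_apply]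
      rw [e1, e2, hdrec n (le_of_lt hn), hy n]
      abel
    calc φ z = φ (c.sum fun n r => r • y n) := by rw [hc]
    _ = c.sum fun n r => r • φ (y n) := by
        rw [map_finsuppSum]; exact Finsupp.sum_congr (fun n _ => by rw [map_smul])
    _ = c.sum fun n r => r • y n := Finsupp.sum_congr (fun n hn => by rw [hφy n (hsupp n hn)])
    _ = z := hc
  · intro v
    rw [Finsupp.lsum_apply]
    exact Submodule.sum_mem _ (fun k _ => Submodule.smul_mem _ _ (hdK k))

/-- The key stabilization property of perfect rings: for any sequence of elements, the chain of
products `a₀ ⋯ aₙ₋₁` stabilizes up to a unit multiple, i.e. `a₀⋯a_{N-1} ∈ (a₀⋯a_N)`. -/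
private lemma perfect_stab (hR : IsPerfectRing R) (a : ℕ → R) :
    ∃ N r, (∏ i ∈ Finset.range N, a i) = (∏ i ∈ Finset.range (N+1), a i) * r := by
  classical
  set y : ℕ → (ℕ →₀ R) := fun n => Finsupp.single n 1 - Finsupp.single (n+1) (a n) with hy
  set K : Submodule R (ℕ →₀ R) := Submodule.span R (Set.range y) with hK
  obtain ⟨P, iP1, iP2, p, hPproj, hpsurj, hsmall⟩ := hR ((ℕ →₀ R) ⧸ K) inferInstance inferInstance
  haveI := hPproj
  -- lift the projection through p
  obtain ⟨h, hh⟩ := Module.projective_lifting_property p K.mkQ hpsurj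
  have hhapp : ∀ v, p (h v) = K.mkQ v := fun v => by
    rw [← LinearMap.comp_apply, hh]
  -- h is surjective, since the kernel of p is superfluous
  have hhsurj : Function.Surjective h := by
    rw [← LinearMap.range_eq_top]
    apply hsmall
    rw [eq_top_iff]
    rintro u -
    obtain ⟨v, hv⟩ := K.mkQ_surjective (p u)
    refine Submodule.mem_sup.mpr ⟨h v, LinearMap.mem_range_self _ _, u - h v, ?_, by abel⟩
    rw [LinearMap.mem_ker, map_sub, hhapp, hv, sub_self]
  -- a section of h, by projectivity of P
  obtain ⟨s, hs⟩ := Module.projective_lifting_property h (LinearMap.id) hhsurj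
  have hsapp : ∀ w, h (s w) = w := fun w => by
    have := congrArg (fun f : P →ₗ[R] P => f w) hs
    simpa using this
  -- p is injective
  have hker : ∀ w, p w = 0 → w = 0 := by
    intro w hw
    have hzK : s w ∈ K := by
      have : K.mkQ (s w) = 0 := by rw [← hhapp, hsapp, hw]
      rwa [← LinearMap.mem_ker, Submodule.ker_mkQ] at this
    obtain ⟨φ, hφz, hφK⟩ := bass_local_split a y (fun n => rfl) (s w) hzK
    set η : P →ₗ[R] P := h ∘ₗ φ ∘ₗ s with hη
    have hηker : ∀ u, p (η u) = 0 := by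
      intro u
      have : φ (s u) ∈ K := hφK _
      rw [hη]
      simp only [LinearMap.comp_apply]
      rw [hhapp]
      rwa [← Submodule.ker_mkQ K, LinearMap.mem_ker] at this
    have hηw : η w = w := by
      rw [hη]; simp only [LinearMap.comp_apply]; rw [hφz, hsapp]
    set ρ : P →ₗ[R] P := LinearMap.id - η with hρ
    have hρw : ρ w = 0 := by rw [hρ]; simp [hηw]
    have hρsurj : Function.Surjective ρ := by
      rw [← LinearMap.range_eq_top]
      apply hsmall
      rw [eq_top_iff]
      rintro u -
      refine Submodule.mem_sup.mpr ⟨ρ u, LinearMap.mem_range_self _ _, η u, ?_, by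
        simp only [hρ, LinearMap.sub_apply, LinearMap.id_apply]; abel⟩
      rw [LinearMap.mem_ker]; exact hηker u
    obtain ⟨t, ht⟩ := Module.projective_lifting_property ρ (LinearMap.id) hρsurj
    have htapp : ∀ u, ρ (t u) = u := fun u => by
      have := congrArg (fun f : P →ₗ[R] P => f u) ht
      simpa using this
    have hkerρ : ∀ u, ρ u = 0 → p u = 0 := by
      intro u hu
      have : u = η u := by
        have : u - η u = 0 := by rw [hρ] at hu; simpa using hu
        exact sub_eq_zero.mp this
      rw [this]; exact hηker u
    have htsurj : Function.Surjective t := by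
      rw [← LinearMap.range_eq_top]
      apply hsmall
      rw [eq_top_iff]
      rintro u -
      refine Submodule.mem_sup.mpr ⟨t (ρ u), LinearMap.mem_range_self _ _, u - t (ρ u), ?_,
        by abel⟩
      rw [LinearMap.mem_ker]
      apply hkerρ
      rw [map_sub, htapp]
      simp
    have hρinj : Function.Injective ρ := by
      intro u u' huu
      obtain ⟨v, rfl⟩ := htsurj u
      obtain ⟨v', rfl⟩ := htsurj u'
      rw [htapp, htapp] at huu
      rw [huu]
    exact hρinj (show ρ w = ρ 0 by rw [hρw, map_zero])
  -- the images of the basis vectors in the quotient form a divisibility chain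
  have hgrec : ∀ n, K.mkQ (Finsupp.single n 1) = a n • K.mkQ (Finsupp.single (n+1) 1) := by
    intro n
    have hyK : K.mkQ (y n) = 0 := by
      rw [← LinearMap.mem_ker, Submodule.ker_mkQ]
      exact Submodule.subset_span ⟨n, rfl⟩
    rw [hy] at hyK
    simp only [map_sub, sub_eq_zero] at hyK
    rw [hyK, ← map_smul, Finsupp.smul_single]
    norm_num
  have hg0 : ∀ n, K.mkQ (Finsupp.single 0 1)
      = (∏ i ∈ Finset.range n, a i) • K.mkQ (Finsupp.single n 1) := by
    intro n
    induction n with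
    | zero => simp
    | succ n ih =>
        rw [ih, hgrec n, Finset.prod_range_succ, smul_smul]
  set v : (ℕ →₀ R) := s (h (Finsupp.single 0 1)) with hv
  have hπv : K.mkQ v = K.mkQ (Finsupp.single 0 1) := by
    rw [← hhapp, hv, hsapp, hhapp]
  have hz0 : v - Finsupp.single 0 1 ∈ K := by
    rw [← Submodule.ker_mkQ K, LinearMap.mem_ker, map_sub, hπv, sub_self]
  rw [hK] at hz0
  obtain ⟨c, hc⟩ := Finsupp.mem_span_range_iff_exists_finsupp.mp hz0
  obtain ⟨N, hsupp⟩ : ∃ N, ∀ n ∈ c.support, n < N := by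
    refine ⟨(c.support.sup _root_.id) + 1, fun n hn => ?_⟩
    have h1 : n ≤ c.support.sup _root_.id := Finset.le_sup (f := _root_.id) hn
    omega
  -- a suitable linear functional
  set lam : (ℕ →₀ R) →ₗ[R] R :=
    Finsupp.lsum R (fun j => LinearMap.toSpanSingleton R R (∏ i ∈ Finset.Ico j N, a i)) with hlam
  have hlamsingle : ∀ j r, lam (Finsupp.single j r) = r * ∏ i ∈ Finset.Ico j N, a i := by
    intro j r
    rw [hlam]
    simp [Finsupp.lsum_single, LinearMap.toSpanSingleton_apply, smul_eq_mul]
  have hlamy : ∀ n < N, lam (y n) = 0 := by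
    intro n hn
    rw [hy]
    simp only [map_sub]
    rw [hlamsingle, hlamsingle, one_mul, Finset.prod_eq_prod_Ico_succ_bot hn]
    ring
  have hlamz0 : lam (v - Finsupp.single 0 1) = 0 := by
    rw [← hc, map_finsuppSum]
    rw [Finsupp.sum]
    apply Finset.sum_eq_zero
    intro n hn
    rw [map_smul, hlamy n (hsupp n hn), smul_zero]
  have hlamv : lam v = ∏ i ∈ Finset.range N, a i := by
    have h1 : lam v - lam (Finsupp.single 0 1) = 0 := by
      rw [← map_sub, hlamz0]
    have h2 : lam v = lam (Finsupp.single 0 1) := sub_eq_zero.mp h1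
    rw [h2, hlamsingle, one_mul, Finset.range_eq_Ico]
  -- v is divisible by the product a₀ ⋯ a_N
  have hdiv : v = (∏ i ∈ Finset.range (N+1), a i) • s (h (Finsupp.single (N+1) 1)) := by
    have hp0 : p (h (Finsupp.single 0 1)
        - (∏ i ∈ Finset.range (N+1), a i) • h (Finsupp.single (N+1) 1)) = 0 := by
      rw [map_sub, map_smul, hhapp, hhapp, hg0 (N+1), sub_self]
    have heq : h (Finsupp.single 0 1)
        = (∏ i ∈ Finset.range (N+1), a i) • h (Finsupp.single (N+1) 1) :=
      sub_eq_zero.mp (hker _ hp0)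
    rw [hv, heq, map_smul]
  refine ⟨N, lam (s (h (Finsupp.single (N+1) 1))), ?_⟩
  rw [← hlamv, hdiv, map_smul, smul_eq_mul]

end aux

/-- Over a commutative perfect ring, every nonzero module contains a simple submodule. -/
theorem exists_simple_submodule_of_perfect (R : Type u) [CommRing R] (hR : IsPerfectRing R)
    (M : Type u) [AddCommGroup M] [Module R M] (hM : Nontrivial M) :
    ∃ L : Submodule R M, IsAtom L := by
  classical
  by_contra hcon
  push_neg at hcon
  -- for every nonzero element, a strictly smaller nonzero cyclic submodule exists
  have hstep : ∀ y : M, y ≠ 0 → ∃ a : R, a • y ≠ 0 ∧ y ∉ Submodule.span R {a • y} := by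
    intro y hy
    have h1 : Submodule.span R {y} ≠ ⊥ := by
      simpa [Submodule.span_singleton_eq_bot] using hy
    have h2 := hcon (Submodule.span R {y})
    rw [IsAtom] at h2
    push_neg at h2
    obtain ⟨b, hblt, hbne⟩ := h2 h1
    obtain ⟨z, hzb, hzne⟩ := Submodule.exists_mem_ne_zero_of_ne_bot hbne
    obtain ⟨a, ha⟩ := Submodule.mem_span_singleton.mp (hblt.le hzb)
    refine ⟨a, by rw [ha]; exact hzne, fun hmem => ?_⟩
    have hle : Submodule.span R {y} ≤ b := by
      rw [Submodule.span_le, Set.singleton_subset_iff]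
      have : y ∈ Submodule.span R {z} := by rwa [ha] at hmem
      exact Submodule.span_le.mpr (Set.singleton_subset_iff.mpr hzb) this
    exact absurd hle hblt.not_ge
  obtain ⟨x0, hx0⟩ := exists_ne (0 : M)
  -- build the descending chain
  let f : ℕ → {y : M // y ≠ 0} := fun n => Nat.rec ⟨x0, hx0⟩
    (fun _ q => ⟨(hstep q.1 q.2).choose • q.1, (hstep q.1 q.2).choose_spec.1⟩) n
  let a : ℕ → R := fun n => (hstep (f n).1 (f n).2).choose
  have hfsucc : ∀ n, (f (n+1)).1 = a n • (f n).1 := fun n => rfl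
  have hnotmem : ∀ n, (f n).1 ∉ Submodule.span R {a n • (f n).1} :=
    fun n => (hstep (f n).1 (f n).2).choose_spec.2
  have hprod : ∀ n, (f n).1 = (∏ i ∈ Finset.range n, a i) • x0 := by
    intro n
    induction n with
    | zero => simp [f]
    | succ n ih =>
        rw [hfsucc n, ih, Finset.prod_range_succ, smul_smul, mul_comm]
  obtain ⟨N, r, hNr⟩ := perfect_stab hR a
  apply hnotmem N
  rw [Submodule.mem_span_singleton]
  refine ⟨r, ?_⟩
  have h1 : a N • (f N).1 = (f (N+1)).1 := (hfsucc N).symm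
  rw [h1, hprod (N+1), hprod N, hNr, smul_smul, mul_comm]
end

section
/- Let R be an almost perfect domain with Q ≠ R. An R-module M is divisible if and only if M has no maximal submodules (i.e., rad(M) = M), if and only if mM = M for every maximal ideal m of R. -/
universe u

open CategoryTheory Limits

/-- `InjDimLE R n M` : the injective dimension of `M` is at most `n`. -/
def InjDimLE (R : Type u) [CommRing R] : ℕ → ModuleCat.{u} R → Prop
  | 0, M => Injective M
  | n + 1, M => ∃ (E : ModuleCat.{u} R) (f : M ⟶ E),
      Mono f ∧ Injective E ∧ InjDimLE R n (cokernel f)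

/-- `ProjDimLE R n M` : the projective dimension of `M` is at most `n`. -/
def ProjDimLE (R : Type u) [CommRing R] : ℕ → ModuleCat.{u} R → Prop
  | 0, M => Projective M
  | n + 1, M => ∃ (P : ModuleCat.{u} R) (f : P ⟶ M),
      Epi f ∧ Projective P ∧ ProjDimLE R n (kernel f)

/-- `FlatDimLE R n M` : the flat (weak) dimension of `M` is at most `n`. -/
def FlatDimLE (R : Type u) [CommRing R] : ℕ → ModuleCat.{u} R → Prop
  | 0, M => Module.Flat R M
  | n + 1, M => ∃ (P : ModuleCat.{u} R) (f : P ⟶ M),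
      Epi f ∧ Module.Flat R P ∧ FlatDimLE R n (kernel f)

/-- An `R`-module is divisible if `rM = M` for every nonzero `r : R`. -/
def IsDivisibleModule (R : Type u) [CommRing R] (M : Type u) [AddCommGroup M] [Module R M] :
    Prop :=
  ∀ r : R, r ≠ 0 → ∀ m : M, ∃ x : M, r • x = m

open Finsupp in
lemma APD.lemA {S : Type u} [CommRing S] {ι : Type u} :
    ∀ (n : ℕ) (e : (ι →₀ S) →ₗ[S] (ι →₀ S)),
      (∀ y, e (e y) = e y) →
      (∀ y i, (e y) i ∈ Ideal.jacobson (⊥ : Ideal S)) →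
      ∀ x : ι →₀ S, e x = x → x.support.card ≤ n → x = 0 := by
  classical
  intro n
  induction n with
  | zero =>
    intro e he hJ x hex hc
    exact Finsupp.support_eq_empty.mp (Finset.card_eq_zero.mp (Nat.le_zero.mp hc))
  | succ n ih =>
    intro e he hJ x hex hcard
    by_cases hx0 : x = 0
    · exact hx0
    obtain ⟨i₀, hi₀⟩ := Finsupp.support_nonempty_iff.mpr hx0
    set j : ι → S := fun i => e (Finsupp.single i 1) i₀ with hj
    have hjJ : ∀ i, j i ∈ Ideal.jacobson (⊥ : Ideal S) := fun i => hJ _ _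
    have key : x i₀ = ∑ i ∈ x.support, x i * j i := by
      have hxsum : x = ∑ i ∈ x.support, (x i) • Finsupp.single i (1 : S) := by
        conv_lhs => rw [← Finsupp.sum_single x, Finsupp.sum]
        exact Finset.sum_congr rfl fun i _ => by
          rw [Finsupp.smul_single, smul_eq_mul, mul_one]
      conv_lhs => rw [← hex, hxsum]
      rw [map_sum, Finsupp.finset_sum_apply]
      exact Finset.sum_congr rfl fun i _ => by
        rw [map_smul, Finsupp.smul_apply, smul_eq_mul]
    have hu : IsUnit (1 - j i₀) := by
      have h9 := Ideal.mem_jacobson_bot.mp (hjJ i₀) (-1)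
      have h10 : j i₀ * (-1) + 1 = 1 - j i₀ := by ring
      rwa [h10] at h9
    obtain ⟨v, hv⟩ := hu.exists_left_inv
    set d : ι → S := fun i => v * j i with hd
    have key2 : x i₀ = ∑ i ∈ x.support.erase i₀, x i * d i := by
      have hadd := Finset.add_sum_erase x.support (fun i => x i * j i) hi₀
      have h2 : x i₀ * (1 - j i₀) = ∑ i ∈ x.support.erase i₀, x i * j i := by
        calc x i₀ * (1 - j i₀)
            = (∑ i ∈ x.support, x i * j i) - x i₀ * j i₀ := by rw [← key]; ring
          _ = ∑ i ∈ x.support.erase i₀, x i * j i := by rw [← hadd]; ring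
      calc x i₀ = x i₀ * ((1 - j i₀) * v) := by rw [mul_comm (1 - j i₀) v, hv, mul_one]
        _ = (x i₀ * (1 - j i₀)) * v := by ring
        _ = (∑ i ∈ x.support.erase i₀, x i * j i) * v := by rw [h2]
        _ = ∑ i ∈ x.support.erase i₀, x i * d i := by
            rw [Finset.sum_mul]
            exact Finset.sum_congr rfl fun i _ => by rw [hd]; ring
    set T' := x.support.erase i₀ with hT'
    set t : (ι →₀ S) →ₗ[S] (ι →₀ S) :=
      Finsupp.lsingle i₀ ∘ₗ (∑ i ∈ T', d i • Finsupp.lapply i) with ht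
    have htapp : ∀ y : ι →₀ S, t y = Finsupp.single i₀ (∑ i ∈ T', d i * y i) := by
      intro y
      rw [ht, LinearMap.comp_apply]
      simp only [LinearMap.sum_apply, LinearMap.smul_apply, Finsupp.lapply_apply, smul_eq_mul]
      rfl
    have htt : ∀ y, t (t y) = 0 := by
      intro y
      rw [htapp, htapp]
      have hz : ∀ i ∈ T', d i * (Finsupp.single i₀ (∑ i ∈ T', d i * y i)) i = 0 := by
        intro i hi
        rw [Finsupp.single_apply, if_neg (fun h => (Finset.ne_of_mem_erase hi) h.symm), mul_zero]
      rw [Finset.sum_congr rfl hz, Finset.sum_const_zero, Finsupp.single_zero]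
    set e' : (ι →₀ S) →ₗ[S] (ι →₀ S) := (LinearMap.id - t) ∘ₗ e ∘ₗ (LinearMap.id + t) with he'
    have he'app : ∀ y, e' y = e (y + t y) - t (e (y + t y)) := by
      intro y
      simp [he', LinearMap.sub_apply, LinearMap.add_apply, LinearMap.comp_apply]
    have hgi : ∀ w : ι →₀ S, (w - t w) + t (w - t w) = w := by
      intro w
      rw [map_sub, htt, sub_zero, sub_add_cancel]
    have he'idem : ∀ y, e' (e' y) = e' y := by
      intro y
      set u := e (y + t y) with hu
      have h1 : e' y = u - t u := he'app y
      rw [h1, he'app, hgi u, show e u = u from he (y + t y)]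
    have hJ' : ∀ y k, (e' y) k ∈ Ideal.jacobson (⊥ : Ideal S) := by
      intro y k
      rw [he'app, Finsupp.sub_apply]
      refine Ideal.sub_mem _ (hJ _ _) ?_
      rw [htapp, Finsupp.single_apply]
      split
      · exact Ideal.sum_mem _ fun i _ => Ideal.mul_mem_left _ _ (hJ _ _)
      · exact Ideal.zero_mem _
    have htx : t x = Finsupp.single i₀ (x i₀) := by
      have hc : (∑ i ∈ T', d i * x i) = x i₀ := by
        rw [key2]
        exact Finset.sum_congr rfl fun i _ => mul_comm _ _
      rw [htapp, hc]
    have hx' : x - t x = Finsupp.erase i₀ x := by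
      rw [htx, Finsupp.erase_eq_sub_single]
    have hfix : e' (x - t x) = x - t x := by
      rw [he'app, hgi x, hex]
    have hcards : (Finsupp.erase i₀ x).support.card ≤ n := by
      rw [Finsupp.support_erase]
      have := Finset.card_erase_of_mem hi₀
      omega
    have hzero : Finsupp.erase i₀ x = 0 := by
      refine ih e' he'idem hJ' _ ?_ hcards
      rw [← hx']
      exact hfix
    have hxi : ∀ i, i ≠ i₀ → x i = 0 := by
      intro i hi
      have := Finsupp.erase_ne (f := x) (a := i₀) hi
      rw [hzero] at this
      simpa using this.symm
    have hxi0 : x i₀ = 0 := by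
      rw [key2]
      refine Finset.sum_eq_zero fun i hi => ?_
      rw [hxi i (Finset.ne_of_mem_erase hi), zero_mul]
    ext i
    by_cases h : i = i₀
    · rw [h, hxi0]; rfl
    · rw [hxi i h]; rfl

/-- Over any commutative ring, a projective module `P` with `mP = P` for all maximal `m`
is trivial (Bass). -/
lemma APD.lemB {S : Type u} [CommRing S] {P : Type u} [AddCommGroup P] [Module S P]
    (hP : Module.Projective S P)
    (h : ∀ m : Ideal S, m.IsMaximal → m • (⊤ : Submodule S P) = ⊤) :
    ∀ p : P, p = 0 := by
  obtain ⟨s, hs⟩ := Module.projective_def.mp hP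
  set π : (P →₀ S) →ₗ[S] P := Finsupp.linearCombination S (id : P → P) with hπ
  set e : (P →₀ S) →ₗ[S] (P →₀ S) := s ∘ₗ π with he
  have hsp : ∀ (p : P) (i : P), (s p) i ∈ Ideal.jacobson (⊥ : Ideal S) := by
    intro p i
    rw [Ideal.jacobson]
    refine Submodule.mem_sInf.mpr fun m hm => ?_
    have hp : p ∈ m • (⊤ : Submodule S P) := by rw [h m hm.2]; trivial
    refine Submodule.smul_induction_on hp ?_ ?_
    · intro r hr q _
      rw [map_smul, Finsupp.smul_apply, smul_eq_mul]
      exact Ideal.mul_mem_right _ _ hr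
    · intro a b ha hb
      rw [map_add, Finsupp.add_apply]
      exact Ideal.add_mem _ ha hb
  have heidem : ∀ y, e (e y) = e y := by
    intro y
    show s (π (s (π y))) = s (π y)
    rw [hs (π y)]
  have heJ : ∀ y i, (e y) i ∈ Ideal.jacobson (⊥ : Ideal S) := fun y i => hsp (π y) i
  intro p
  have hsp0 : s p = 0 := by
    refine APD.lemA (s p).support.card e heidem heJ (s p) ?_ le_rfl
    show s (π (s p)) = s p
    rw [hs p]
  have := hs p
  rw [hsp0, map_zero] at this
  exact this.symm

/-- If some maximal ideal does not act fully on `X`, then `X` has a maximal submodule. -/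
lemma APD.lemZ {S : Type u} [CommRing S] {X : Type u} [AddCommGroup X] [Module S X]
    {m : Ideal S} (hm : m.IsMaximal) (hne : m • (⊤ : Submodule S X) ≠ ⊤) :
    ∃ L : Submodule S X, IsCoatom L := by
  obtain ⟨x, hx⟩ : ∃ x, x ∉ m • (⊤ : Submodule S X) := by
    by_contra hcon
    push_neg at hcon
    exact hne (top_le_iff.mp fun y _ => hcon y)
  set 𝒮 : Set (Submodule S X) := {L | m • (⊤ : Submodule S X) ≤ L ∧ x ∉ L} with h𝒮
  have hchaincond : ∀ c ⊆ 𝒮, IsChain (· ≤ ·) c → ∀ y ∈ c, ∃ ub ∈ 𝒮, ∀ z ∈ c, z ≤ ub := by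
    intro c hc hchain y hy
    refine ⟨sSup c, ⟨le_trans (hc hy).1 (le_sSup hy), fun hmem => ?_⟩, fun z hz => le_sSup hz⟩
    obtain ⟨L, hLc, hxL⟩ := (Submodule.mem_sSup_of_directed ⟨y, hy⟩ hchain.directedOn).mp hmem
    exact (hc hLc).2 hxL
  obtain ⟨L, -, hLmax⟩ := zorn_le_nonempty₀ 𝒮 hchaincond (m • ⊤) ⟨le_rfl, hx⟩
  have hLmem : L ∈ 𝒮 := hLmax.1
  refine ⟨L, ⟨fun htop => hLmem.2 (htop ▸ trivial), ?_⟩⟩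
  intro X' hX'
  have hxX' : x ∈ X' := by
    by_contra hxn
    exact absurd (hLmax.2 ⟨le_trans hLmem.1 hX'.le, hxn⟩ hX'.le) (not_le_of_gt hX')
  rw [Submodule.eq_top_iff']
  intro y
  by_cases hxy : x ∈ L ⊔ Submodule.span S {y}
  · obtain ⟨l, hl, z, hz, hlz⟩ := Submodule.mem_sup.mp hxy
    obtain ⟨a, rfl⟩ := Submodule.mem_span_singleton.mp hz
    by_cases ham : a ∈ m
    · refine absurd ?_ hLmem.2
      have haym : a • y ∈ m • (⊤ : Submodule S X) := Submodule.smul_mem_smul ham trivial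
      rw [← hlz]
      exact L.add_mem hl (hLmem.1 haym)
    · have hsup : m ⊔ Ideal.span {a} = ⊤ := by
        refine (Ideal.isMaximal_def.mp hm).2 _ (lt_of_le_of_ne le_sup_left fun hEq => ham ?_)
        rw [hEq]
        exact Submodule.mem_sup_right (Ideal.subset_span (Set.mem_singleton a))
      have h1 : (1 : S) ∈ m ⊔ Ideal.span {a} := by rw [hsup]; trivial
      obtain ⟨c, hcm, w, hw, hcw⟩ := Submodule.mem_sup.mp h1
      obtain ⟨b, hb⟩ := Ideal.mem_span_singleton'.mp hw
      have hay : a • y ∈ X' := by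
        have : a • y = x - l := by rw [← hlz]; abel
        rw [this]
        exact sub_mem hxX' (hX'.le hl)
      have hyeq : c • y + b • (a • y) = y := by
        rw [← mul_smul, ← add_smul, hb, hcw, one_smul]
      rw [← hyeq]
      exact X'.add_mem (hX'.le (hLmem.1 (Submodule.smul_mem_smul hcm trivial)))
        (X'.smul_mem b hay)
  · have hmem : L ⊔ Submodule.span S {y} ∈ 𝒮 := ⟨le_trans hLmem.1 le_sup_left, hxy⟩
    have hle : L ⊔ Submodule.span S {y} ≤ L := hLmax.2 hmem le_sup_left
    exact hX'.le (hle (Submodule.mem_sup_right (Submodule.mem_span_singleton_self y)))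

lemma APD.comap_coatom {R M N : Type u} [CommRing R] [AddCommGroup M] [Module R M]
    [AddCommGroup N] [Module R N] (f : M →ₗ[R] N) (hf : Function.Surjective f)
    {K : Submodule R N} (hK : IsCoatom K) : IsCoatom (K.comap f) := by
  constructor
  · intro htop
    refine hK.1 (top_le_iff.mp fun y _ => ?_)
    obtain ⟨x, rfl⟩ := hf y
    exact (Submodule.mem_comap).mp (htop ▸ trivial)
  · intro X hX
    have h1 : K ≤ X.map f := by
      rw [← Submodule.map_comap_eq_of_surjective hf K]
      exact Submodule.map_mono hX.le
    have h2 : K ≠ X.map f := by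
      intro hEq
      have : X ≤ K.comap f := fun x hx => Submodule.mem_comap.mpr (hEq ▸ Submodule.mem_map_of_mem hx)
      exact absurd (lt_of_lt_of_le hX this) (lt_irrefl _)
    have h3 : X.map f = ⊤ := hK.2 _ (lt_of_le_of_ne h1 h2)
    have h4 : X ⊔ LinearMap.ker f = ⊤ := by
      rw [← Submodule.comap_map_eq f X, h3, Submodule.comap_top]
    have h5 : LinearMap.ker f ≤ X := le_trans (fun x hx => by
      simp only [Submodule.mem_comap, (LinearMap.mem_ker).mp hx, Submodule.zero_mem] ) hX.le
    rwa [sup_eq_left.mpr h5] at h4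

lemma APD.map_coatom {R M N : Type u} [CommRing R] [AddCommGroup M] [Module R M]
    [AddCommGroup N] [Module R N] (f : M →ₗ[R] N) (hf : Function.Surjective f)
    {L : Submodule R M} (hker : LinearMap.ker f ≤ L) (hL : IsCoatom L) :
    IsCoatom (L.map f) := by
  constructor
  · intro htop
    refine hL.1 ?_
    have := congrArg (Submodule.comap f) htop
    rw [Submodule.comap_map_eq, Submodule.comap_top, sup_eq_left.mpr hker] at this
    exact this
  · intro Y hY
    have h1 : L ≤ Y.comap f := le_trans (Submodule.le_comap_map f L) (Submodule.comap_mono hY.le)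
    have h2 : L ≠ Y.comap f := by
      intro hEq
      have hYe : Y ≤ L.map f := by
        conv_lhs => rw [← Submodule.map_comap_eq_of_surjective hf Y, ← hEq]
      exact absurd (lt_of_lt_of_le hY hYe) (lt_irrefl _)
    have h3 : Y.comap f = ⊤ := hL.2 _ (lt_of_le_of_ne h1 h2)
    rw [← Submodule.map_comap_eq_of_surjective hf Y, h3, Submodule.map_top,
      LinearMap.range_eq_top.mpr hf]

/-- Transfer absence of coatoms from the `R`-submodule lattice to the `R ⧸ I`-submodule
lattice, when the two actions are compatible. -/
lemma APD.coatom_transfer {R : Type u} [CommRing R] (I : Ideal R) {N : Type u} [AddCommGroup N]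
    [Module R N] [Module (R ⧸ I) N]
    (hcompat : ∀ (a : R) (x : N), (Ideal.Quotient.mk I a) • x = a • x)
    (h : ∀ L : Submodule R N, ¬ IsCoatom L) :
    ∀ K : Submodule (R ⧸ I) N, ¬ IsCoatom K := by
  intro K hK
  set K' : Submodule R N :=
    { carrier := K
      add_mem' := fun ha hb => K.add_mem ha hb
      zero_mem' := K.zero_mem
      smul_mem' := fun a x hx => by
        have h2 := K.smul_mem (Ideal.Quotient.mk I a) hx
        rwa [hcompat] at h2 } with hK'
  have hKK' : ∀ z : N, z ∈ K' ↔ z ∈ K := fun z => Iff.rfl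
  refine h K' ⟨?_, ?_⟩
  · intro htop
    exact hK.1 (Submodule.eq_top_iff'.mpr fun y => (hKK' y).mp (htop ▸ trivial))
  · intro X hX
    set Xt : Submodule (R ⧸ I) N :=
      { carrier := X
        add_mem' := fun ha hb => X.add_mem ha hb
        zero_mem' := X.zero_mem
        smul_mem' := fun s x hx => by
          obtain ⟨a, rfl⟩ := Ideal.Quotient.mk_surjective s
          rw [hcompat]
          exact X.smul_mem a hx } with hXt
    have hXXt : ∀ z : N, z ∈ Xt ↔ z ∈ X := fun z => Iff.rfl
    have hlt : K < Xt := by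
      constructor
      · intro z hz
        exact (hXXt z).mpr (hX.le ((hKK' z).mpr hz))
      · intro hle
        refine absurd (fun z hz => (hKK' z).mp ?_) (not_le_of_gt hX)
        exact hle ((hXXt z).mpr hz)
    have htop := hK.2 Xt hlt
    refine Submodule.eq_top_iff'.mpr fun y => ?_
    exact (hXXt y).mp (htop ▸ trivial)

/-- If every maximal ideal acts fully on `M`, then `M` has no maximal submodules. -/
lemma APD.smul_max_imp_no_coatom {R : Type u} [CommRing R] {M : Type u} [AddCommGroup M]
    [Module R M] (h : ∀ m : Ideal R, m.IsMaximal → m • (⊤ : Submodule R M) = ⊤) :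
    ∀ L : Submodule R M, ¬ IsCoatom L := by
  intro L hL
  have hsimple : IsSimpleModule R (M ⧸ L) := isSimpleModule_iff_isCoatom.mpr hL
  obtain ⟨x, hx⟩ : ∃ x : M, x ∉ L := by
    by_contra hcon
    push_neg at hcon
    exact hL.1 (Submodule.eq_top_iff'.mpr hcon)
  have hx0 : (Submodule.Quotient.mk x : M ⧸ L) ≠ 0 :=
    fun h0 => hx ((Submodule.Quotient.mk_eq_zero L).mp h0)
  set φ := LinearMap.toSpanSingleton R (M ⧸ L) (Submodule.Quotient.mk x) with hφ
  have hm : Ideal.IsMaximal (LinearMap.ker φ) :=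
    IsSimpleModule.ker_toSpanSingleton_isMaximal R hx0
  have hsurj : Function.Surjective φ := IsSimpleModule.toSpanSingleton_surjective R hx0
  have hml : LinearMap.ker φ • (⊤ : Submodule R M) ≤ L := by
    refine Submodule.smul_le.mpr fun a ha y _ => ?_
    rw [← Submodule.Quotient.mk_eq_zero L]
    obtain ⟨c, hc⟩ := hsurj (Submodule.Quotient.mk y)
    have h1 : (Submodule.Quotient.mk (a • y) : M ⧸ L) = a • (Submodule.Quotient.mk y : M ⧸ L) :=
      Submodule.Quotient.mk_smul L a y
    rw [h1, ← hc]
    have h2 : a • φ c = φ (c * a) := by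
      rw [← map_smul, smul_eq_mul, mul_comm]
    rw [h2, show φ (c * a) = c • φ a from by rw [← smul_eq_mul, map_smul],
      LinearMap.mem_ker.mp ha, smul_zero]
  rw [h _ hm] at hml
  exact hL.1 (top_le_iff.mp hml)

open Pointwise in
lemma APD.div_imp_smul_max {R : Type u} [CommRing R] [IsDomain R] (hQ : ¬ IsField R)
    {M : Type u} [AddCommGroup M] [Module R M] (hd : IsDivisibleModule R M) :
    ∀ m : Ideal R, m.IsMaximal → m • (⊤ : Submodule R M) = ⊤ := by
  intro m hm
  have hmbot : m ≠ ⊥ := by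
    intro hbot
    refine hQ ⟨exists_pair_ne R, mul_comm, ?_⟩
    intro a ha
    have hcoatom : IsCoatom (⊥ : Ideal R) := Ideal.isMaximal_def.mp (hbot ▸ hm)
    have hspan : Ideal.span {a} = ⊤ := hcoatom.2 _ (bot_lt_iff_ne_bot.mpr (by
      simpa [Ideal.span_singleton_eq_bot] using ha))
    exact (Ideal.span_singleton_eq_top.mp hspan).exists_right_inv
  obtain ⟨r, hrm, hr0⟩ := (Submodule.ne_bot_iff m).mp hmbot
  refine top_le_iff.mp fun y _ => ?_
  obtain ⟨z, hz⟩ := hd r hr0 y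
  rw [← hz]
  exact Submodule.smul_mem_smul hrm trivial

open Pointwise in
lemma APD.no_coatom_imp_div {R : Type u} [CommRing R] [IsDomain R] (hR : IsAPD R)
    {M : Type u} [AddCommGroup M] [Module R M]
    (h : ∀ L : Submodule R M, ¬ IsCoatom L) : IsDivisibleModule R M := by
  intro r hr x
  have hIbot : (Ideal.span {r} : Ideal R) ≠ ⊥ := by
    simpa [Ideal.span_singleton_eq_bot] using hr
  have hNnoR : ∀ L : Submodule R (M ⧸ (Ideal.span {r} : Ideal R) • (⊤ : Submodule R M)),
      ¬ IsCoatom L := by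
    intro L hL
    exact h _ (APD.comap_coatom (Submodule.mkQ _) (Submodule.mkQ_surjective _) hL)
  have hNnoS : ∀ K : Submodule (R ⧸ (Ideal.span {r} : Ideal R))
      (M ⧸ (Ideal.span {r} : Ideal R) • (⊤ : Submodule R M)), ¬ IsCoatom K := by
    refine APD.coatom_transfer _ (fun a z => ?_) hNnoR
    obtain ⟨mm, rfl⟩ := Submodule.Quotient.mk_surjective _ z
    exact Module.Quotient.mk_smul_mk (M := M) (I := Ideal.span {r}) a mm
  obtain ⟨P, iAG, iMod, f, hfproj, hfsurj, hfcov⟩ :=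
    hR (Ideal.span {r}) hIbot (M ⧸ (Ideal.span {r} : Ideal R) • (⊤ : Submodule R M)) _ _
  have hPno : ∀ L : Submodule (R ⧸ (Ideal.span {r} : Ideal R)) P, ¬ IsCoatom L := by
    intro L hL
    have hker : LinearMap.ker f ≤ L := by
      by_contra hk
      have hlt : L < L ⊔ LinearMap.ker f :=
        lt_of_le_of_ne le_sup_left (fun hEq => hk (by rw [hEq]; exact le_sup_right))
      exact hL.1 (hfcov _ (hL.2 _ hlt))
    exact hNnoS _ (APD.map_coatom f hfsurj hker hL)
  have hPsm : ∀ m' : Ideal (R ⧸ (Ideal.span {r} : Ideal R)), m'.IsMaximal →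
      m' • (⊤ : Submodule (R ⧸ (Ideal.span {r} : Ideal R)) P) = ⊤ := by
    intro m' hm'
    by_contra hne
    obtain ⟨L, hL⟩ := APD.lemZ hm' hne
    exact hPno L hL
  have hP0 : ∀ p : P, p = 0 := APD.lemB hfproj hPsm
  have hN0 : ∀ z : (M ⧸ (Ideal.span {r} : Ideal R) • (⊤ : Submodule R M)), z = 0 := by
    intro z
    obtain ⟨p, rfl⟩ := hfsurj z
    rw [hP0 p, map_zero]
  have hITtop : (Ideal.span {r} : Ideal R) • (⊤ : Submodule R M) = ⊤ := by
    refine Submodule.eq_top_iff'.mpr fun y => ?_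
    exact (Submodule.Quotient.mk_eq_zero _).mp (hN0 (Submodule.Quotient.mk y))
  have hx : x ∈ (Ideal.span {r} : Ideal R) • (⊤ : Submodule R M) := by rw [hITtop]; trivial
  rw [Submodule.ideal_span_singleton_smul] at hx
  have hx2 : x ∈ r • ((⊤ : Submodule R M) : Set M) := by
    rw [← Submodule.coe_pointwise_smul]; exact hx
  obtain ⟨y, -, hy⟩ := Set.mem_smul_set.mp hx2
  exact ⟨y, hy⟩

/-- Over an almost perfect domain that is not a field, a module `M` is divisible iff it
has no maximal submodules (i.e. `rad M = M`) iff `mM = M` for every maximal ideal `m`. -/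
theorem divisible_iff_no_maximal_submodule_iff_smul_maximal (R : Type u) [CommRing R]
    [IsDomain R] (hR : IsAPD R) (hQ : ¬ IsField R)
    (M : Type u) [AddCommGroup M] [Module R M] :
    (IsDivisibleModule R M ↔ ∀ L : Submodule R M, ¬ IsCoatom L) ∧
    (IsDivisibleModule R M ↔
      ∀ m : Ideal R, m.IsMaximal → m • (⊤ : Submodule R M) = ⊤) := by
  refine ⟨⟨fun hd => APD.smul_max_imp_no_coatom (APD.div_imp_smul_max hQ hd),
    fun hnc => APD.no_coatom_imp_div hR hnc⟩,
    ⟨fun hd => APD.div_imp_smul_max hQ hd,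
    fun hsm => APD.no_coatom_imp_div hR (APD.smul_max_imp_no_coatom hsm)⟩⟩
end

section
/- Let R be an h-local domain with field of fractions Q, X a set of maximal ideals of R, X' its complement in Max(R), R_(X) := ⋂_{m ∈ X} R_m and R_(X') := ⋂_{m ∈ X'} R_m (each intersection taken inside Q, and equal to Q if the index set is empty). Then Q/R = R_(X)/R ⊕ R_(X')/R as internal direct sum of R-submodules of Q/R. -/
universe u

/-- An integral domain is `h`-local if every proper quotient is semilocal and every
quotient by a nonzero prime is local. -/
def IsHLocal (R : Type u) [CommRing R] [IsDomain R] : Prop :=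
  (∀ I : Ideal R, I ≠ ⊥ → {m : Ideal (R ⧸ I) | m.IsMaximal}.Finite) ∧
  (∀ P : Ideal R, P ≠ ⊥ → P.IsPrime → IsLocalRing (R ⧸ P))

/-- The localization `R_m` at a maximal ideal `m`, viewed as an `R`-submodule of the
fraction field `K`. -/
noncomputable def locAt (R K : Type u) [CommRing R] [IsDomain R] [Field K] [Algebra R K]
    [IsFractionRing R K] (m : Ideal R) (hm : m.IsMaximal) : Submodule R K :=
  haveI := hm.isPrime
  Subalgebra.toSubmodule (Localization.subalgebra K m.primeCompl
    (fun x hx => mem_nonZeroDivisors_of_ne_zero (fun h => hx (h ▸ m.zero_mem))))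

/-- `R_(X) = ⋂_{m ∈ X} R_m ⊆ K` (equal to `K = Q` when `X = ∅`). -/
noncomputable def locInt (R K : Type u) [CommRing R] [IsDomain R] [Field K] [Algebra R K]
    [IsFractionRing R K] (X : Set (Ideal R)) (hX : ∀ m ∈ X, m.IsMaximal) :
    Submodule R K :=
  ⨅ m : X, locAt R K m.1 (hX m.1 m.2)

/-- The copy of `R` inside its fraction field `K`, as an `R`-submodule. -/
noncomputable def ringInK (R K : Type u) [CommRing R] [IsDomain R] [Field K] [Algebra R K]
    [IsFractionRing R K] : Submodule R K :=
  LinearMap.range (Algebra.linearMap R K)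

open nonZeroDivisors

section Aux

variable {R K : Type u} [CommRing R] [IsDomain R] [Field K] [Algebra R K] [IsFractionRing R K]

theorem mem_locAt {m : Ideal R} (hm : m.IsMaximal) {x : K} :
    x ∈ locAt R K m hm ↔ ∃ a s : R, s ∉ m ∧ x * algebraMap R K s = algebraMap R K a := by
  haveI := hm.isPrime
  constructor
  · intro hx
    obtain ⟨a, s, hs, rfl⟩ :
        ∃ (a s : R) (hs : s ∈ m.primeCompl), _ = IsLocalization.mk' K a ⟨s, _⟩ := hx
    exact ⟨a, s, hs, IsLocalization.mk'_spec _ a _⟩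
  · rintro ⟨a, s, hs, h⟩
    exact show ∃ (a s : R) (hs : s ∈ m.primeCompl), x = IsLocalization.mk' K a ⟨s, _⟩ from
      ⟨a, s, hs, IsLocalization.eq_mk'_iff_mul_eq.mpr h⟩

theorem ringInK_le_locAt {m : Ideal R} (hm : m.IsMaximal) : ringInK R K ≤ locAt R K m hm := by
  rintro _ ⟨r, rfl⟩
  exact (mem_locAt hm).2 ⟨r, 1, m.ne_top_iff_one.mp hm.ne_top, by simp⟩

theorem ringInK_le_locInt (X : Set (Ideal R)) (hX : ∀ m ∈ X, m.IsMaximal) :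
    ringInK R K ≤ locInt R K X hX :=
  le_iInf fun m => ringInK_le_locAt _

theorem iInf_locAt_eq :
    (⨅ v : MaximalSpectrum R, locAt R K v.asIdeal v.isMaximal) = ringInK R K := by
  ext x
  rw [Submodule.mem_iInf]
  constructor
  · intro h
    have hb : x ∈ (⊥ : Subalgebra R K) := by
      rw [← MaximalSpectrum.iInf_localization_eq_bot R K, Algebra.mem_iInf]
      intro v
      obtain ⟨a, s, hs, hx⟩ := (mem_locAt v.isMaximal).1 (h v)
      have hs0 : algebraMap R K s ≠ 0 :=
        (map_ne_zero_iff _ (IsFractionRing.injective R K)).mpr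
          (fun h0 => hs (h0 ▸ v.asIdeal.zero_mem))
      exact show ∃ (a s : R) (_ : s ∈ v.asIdeal.primeCompl),
          x = algebraMap R K a * (algebraMap R K s)⁻¹ from
        ⟨a, s, hs, (eq_mul_inv_iff_mul_eq₀ hs0).mpr hx⟩
    obtain ⟨r, hr⟩ := Algebra.mem_bot.1 hb
    exact ⟨r, hr⟩
  · intro hx v
    exact ringInK_le_locAt v.isMaximal hx

theorem locInt_inf (X : Set (Ideal R)) (hX : ∀ m ∈ X, m.IsMaximal) :
    locInt R K X hX ⊓ locInt R K {m | m.IsMaximal ∧ m ∉ X} (fun _ h => h.1) = ringInK R K := by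
  apply le_antisymm
  · rw [← iInf_locAt_eq (R := R) (K := K)]
    refine le_iInf fun v => ?_
    by_cases hv : v.asIdeal ∈ X
    · exact inf_le_left.trans (iInf_le _ (⟨v.asIdeal, hv⟩ : X))
    · exact inf_le_right.trans
        (iInf_le _ (⟨v.asIdeal, v.isMaximal, hv⟩ : {m : Ideal R | m.IsMaximal ∧ m ∉ X}))
  · exact le_inf (ringInK_le_locInt _ _) (ringInK_le_locInt _ _)

/-- The `m`-saturation of the principal ideal `(b)`:  `b R_m ∩ R`. -/
def satAt (b : R) (m : Ideal R) (hm : m.IsPrime) : Ideal R where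
  carrier := {r | ∃ t, t ∉ m ∧ t * r ∈ Ideal.span {b}}
  add_mem' := by
    rintro a c ⟨t, ht, hta⟩ ⟨s, hs, hsc⟩
    refine ⟨t * s, fun h => (hm.mem_or_mem h).elim ht hs, ?_⟩
    have h : t * s * (a + c) = s * (t * a) + t * (s * c) := by ring
    rw [h]
    exact Ideal.add_mem _ (Ideal.mul_mem_left _ _ hta) (Ideal.mul_mem_left _ _ hsc)
  zero_mem' := ⟨1, m.ne_top_iff_one.mp hm.ne_top, by simp⟩
  smul_mem' := by
    rintro c a ⟨t, ht, hta⟩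
    refine ⟨t, ht, ?_⟩
    have h : t * (c • a) = c * (t * a) := by simp [smul_eq_mul]; ring
    rw [h]
    exact Ideal.mul_mem_left _ _ hta

theorem mem_satAt {b : R} {m : Ideal R} {hm : m.IsPrime} {r : R} :
    r ∈ satAt b m hm ↔ ∃ t, t ∉ m ∧ t * r ∈ Ideal.span {b} := Iff.rfl

theorem b_mem_satAt {b : R} {m : Ideal R} (hm : m.IsPrime) : b ∈ satAt b m hm :=
  ⟨1, m.ne_top_iff_one.mp hm.ne_top, by simpa using Ideal.mem_span_singleton_self b⟩

theorem satAt_le {b : R} {m : Ideal R} (hm : m.IsPrime) (hb : b ∈ m) : satAt b m hm ≤ m := by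
  rintro r ⟨t, ht, htr⟩
  have : t * r ∈ m := Ideal.span_le.mpr (by simpa using hb) htr
  exact (hm.mem_or_mem this).resolve_left ht

theorem exists_pow_absorb {I P : Ideal R} (hP : P ∈ I.minimalPrimes) {x : R} (hx : x ∈ P) :
    ∃ (n : ℕ) (u : R), u ∉ P ∧ u * x ^ n ∈ I := by
  haveI hPp : P.IsPrime := hP.1.1
  by_contra hcon
  push_neg at hcon
  have hdisj : Disjoint (I : Set R) ↑(P.primeCompl ⊔ Submonoid.powers x) := by
    rw [Set.disjoint_left]
    rintro z hzI hzS
    obtain ⟨u, hu, w, hw, rfl⟩ := Submonoid.mem_sup.mp hzS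
    obtain ⟨n, rfl⟩ := hw
    exact hcon n u hu hzI
  obtain ⟨Q, hQp, hIQ, hQd⟩ := Ideal.exists_le_prime_disjoint _ _ hdisj
  have hQP : Q ≤ P := fun z hz => by_contra fun hzP =>
    Set.disjoint_left.mp hQd hz ((le_sup_left : P.primeCompl ≤ _) hzP)
  have hle := hP.2 ⟨hQp, hIQ⟩ hQP
  exact Set.disjoint_left.mp hQd (hle hx)
    ((le_sup_right : Submonoid.powers x ≤ _) ⟨1, pow_one x⟩)

theorem map_quot_isMaximal {I m : Ideal R} (hm : m.IsMaximal) (hIm : I ≤ m) :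
    (m.map (Ideal.Quotient.mk I)).IsMaximal ∧
      (m.map (Ideal.Quotient.mk I)).comap (Ideal.Quotient.mk I) = m := by
  have hsur : Function.Surjective (Ideal.Quotient.mk I) := Ideal.Quotient.mk_surjective
  have hcm : (m.map (Ideal.Quotient.mk I)).comap (Ideal.Quotient.mk I) = m := by
    rw [Ideal.comap_map_of_surjective _ hsur]
    have : RingHom.ker (Ideal.Quotient.mk I) = I := Ideal.mk_ker
    rw [← RingHom.ker_eq_comap_bot, this]
    exact sup_eq_left.mpr hIm
  refine ⟨?_, hcm⟩
  rcases Ideal.map_eq_top_or_isMaximal_of_surjective _ hsur hm with h | h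
  · exfalso
    apply hm.ne_top
    rw [← hcm, h, Ideal.comap_top]
  · exact h

/-- The key `h`-local lemma: for `b ≠ 0` and distinct maximal ideals `m ≠ m'`,
the `m`-saturation of `(b)` is not contained in `m'`. -/
theorem satAt_not_le (hR : IsHLocal R) {b : R} (hb : b ≠ 0) {m m' : Ideal R}
    (hm : m.IsMaximal) (hm' : m'.IsMaximal) (hne : m ≠ m') :
    ¬ satAt b m hm.isPrime ≤ m' := by
  intro hle
  haveI := hm'.isPrime
  obtain ⟨P, hP, hPm'⟩ := Ideal.exists_minimalPrimes_le hle
  have hPprime : P.IsPrime := hP.1.1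
  have hKP : satAt b m hm.isPrime ≤ P := hP.1.2
  have hPm : P ≤ m := by
    intro x hx
    by_contra hxm
    obtain ⟨n, u, hu, hun⟩ := exists_pow_absorb hP hx
    obtain ⟨t, ht, htun⟩ := hun
    apply hu
    apply hKP
    refine ⟨t * x ^ n, fun h => ?_, ?_⟩
    · rcases hm.isPrime.mem_or_mem h with h' | h'
      · exact ht h'
      · exact hxm (hm.isPrime.mem_of_pow_mem n h')
    · have h : t * x ^ n * u = t * (u * x ^ n) := by ring
      rw [h]
      exact htun
  have hPne : P ≠ ⊥ := by
    intro h
    exact hb (by simpa [h] using hKP (b_mem_satAt hm.isPrime))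
  haveI := hR.2 P hPne hPprime
  obtain ⟨hmax₁, hcm₁⟩ := map_quot_isMaximal hm hPm
  obtain ⟨hmax₂, hcm₂⟩ := map_quot_isMaximal hm' hPm'
  apply hne
  rw [← hcm₁, ← hcm₂, IsLocalRing.eq_maximalIdeal hmax₁, IsLocalRing.eq_maximalIdeal hmax₂]

theorem support_finite (hR : IsHLocal R) {b : R} (hb : b ≠ 0) :
    {m : Ideal R | m.IsMaximal ∧ b ∈ m}.Finite := by
  have hI : Ideal.span {b} ≠ ⊥ := by simpa [Ideal.span_singleton_eq_bot] using hb
  have hfin := hR.1 _ hI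
  apply Set.Finite.of_finite_image (f := Ideal.map (Ideal.Quotient.mk (Ideal.span {b})))
  · apply hfin.subset
    rintro _ ⟨m, ⟨hm, hbm⟩, rfl⟩
    exact (map_quot_isMaximal hm (Ideal.span_le.mpr (Set.singleton_subset_iff.mpr hbm))).1
  · rintro m₁ ⟨hm₁, hbm₁⟩ m₂ ⟨hm₂, hbm₂⟩ h
    have e₁ := (map_quot_isMaximal hm₁ (Ideal.span_le.mpr (Set.singleton_subset_iff.mpr hbm₁))).2
    have e₂ := (map_quot_isMaximal hm₂ (Ideal.span_le.mpr (Set.singleton_subset_iff.mpr hbm₂))).2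
    rw [← e₁, ← e₂, h]

theorem smul_mk'_mem_locAt {m : Ideal R} (hm : m.IsMaximal) (x a : R) {b : R} (hb : b ∈ R⁰)
    (h : b ∉ m ∨ x ∈ satAt b m hm.isPrime) :
    x • IsLocalization.mk' K a ⟨b, hb⟩ ∈ locAt R K m hm := by
  rcases h with hbm | ⟨t, ht, htx⟩
  · exact Submodule.smul_mem _ _
      ((mem_locAt hm).2 ⟨a, b, hbm, IsLocalization.mk'_spec _ _ _⟩)
  · rw [Ideal.mem_span_singleton] at htx
    obtain ⟨c, hc⟩ := htx
    refine (mem_locAt hm).2 ⟨c * a, t, ht, ?_⟩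
    have hbK : algebraMap R K b ≠ 0 :=
      (map_ne_zero_iff _ (IsFractionRing.injective R K)).mpr (nonZeroDivisors.ne_zero hb)
    apply mul_right_cancel₀ hbK
    have spec := IsLocalization.mk'_spec K a (⟨b, hb⟩ : R⁰)
    rw [Algebra.smul_def]
    calc algebraMap R K x * IsLocalization.mk' K a ⟨b, hb⟩ * algebraMap R K t * algebraMap R K b
        = algebraMap R K x * algebraMap R K t *
            (IsLocalization.mk' K a ⟨b, hb⟩ * algebraMap R K b) := by ring
      _ = algebraMap R K x * algebraMap R K t * algebraMap R K a := by rw [spec]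
      _ = algebraMap R K (x * t * a) := by rw [map_mul, map_mul]
      _ = algebraMap R K (c * a * b) := by rw [show x * t * a = c * a * b from by
            linear_combination a * hc]
      _ = algebraMap R K (c * a) * algebraMap R K b := by rw [map_mul]

theorem locInt_sup (hR : IsHLocal R) (X : Set (Ideal R)) (hX : ∀ m ∈ X, m.IsMaximal) :
    locInt R K X hX ⊔ locInt R K {m | m.IsMaximal ∧ m ∉ X} (fun _ h => h.1) = ⊤ := by
  classical
  rw [eq_top_iff]
  rintro q -
  obtain ⟨a, ⟨b, hb⟩, rfl⟩ : ∃ (a : R) (b : R⁰), IsLocalization.mk' K a b = q :=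
    ⟨_, _, (IsLocalization.mk'_surjective R⁰ q).choose_spec⟩
  have hb0 : b ≠ 0 := nonZeroDivisors.ne_zero hb
  set g : Ideal R → Ideal R := fun m =>
    if hm : m.IsPrime then satAt b m hm else ⊤ with hg
  have hSfin := support_finite hR hb0
  set S : Finset (Ideal R) := hSfin.toFinset with hS
  set S₁ : Finset (Ideal R) := S.filter (· ∈ X) with hS₁
  set S₂ : Finset (Ideal R) := S.filter (· ∉ X) with hS₂
  have hmemS : ∀ m ∈ S, m.IsMaximal ∧ b ∈ m := by
    intro m hm
    rw [hS, Set.Finite.mem_toFinset] at hm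
    exact hm
  have hcomax : S₁.inf g ⊔ S₂.inf g = ⊤ := by
    by_contra hne
    obtain ⟨p, hp, hle⟩ := Ideal.exists_le_maximal _ hne
    haveI := hp.isPrime
    obtain ⟨m₁, hm₁S, hm₁⟩ := (Ideal.IsPrime.inf_le' hp.isPrime).1 (le_trans le_sup_left hle)
    obtain ⟨m₂, hm₂S, hm₂⟩ := (Ideal.IsPrime.inf_le' hp.isPrime).1 (le_trans le_sup_right hle)
    rw [hS₁, Finset.mem_filter] at hm₁S
    rw [hS₂, Finset.mem_filter] at hm₂S
    obtain ⟨hm₁max, _⟩ := hmemS _ hm₁S.1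
    obtain ⟨hm₂max, _⟩ := hmemS _ hm₂S.1
    have hp₁ : p = m₁ := by
      by_contra hne'
      refine satAt_not_le hR hb0 hm₁max hp (Ne.symm hne') ?_
      rw [hg] at hm₁
      simpa [hm₁max.isPrime] using hm₁
    have hp₂ : p = m₂ := by
      by_contra hne'
      refine satAt_not_le hR hb0 hm₂max hp (Ne.symm hne') ?_
      rw [hg] at hm₂
      simpa [hm₂max.isPrime] using hm₂
    exact hm₂S.2 (by rw [← hp₂, hp₁]; exact hm₁S.2)
  obtain ⟨x, hx, y, hy, hxy⟩ := Submodule.mem_sup.1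
    (show (1 : R) ∈ S₁.inf g ⊔ S₂.inf g from hcomax ▸ Submodule.mem_top)
  have hq : IsLocalization.mk' K a ⟨b, hb⟩ =
      x • IsLocalization.mk' K a ⟨b, hb⟩ + y • IsLocalization.mk' K a ⟨b, hb⟩ := by
    rw [← add_smul, hxy, one_smul]
  rw [hq]
  have hmem : ∀ (z : R) (T : Finset (Ideal R)), z ∈ T.inf g →
      ∀ m : Ideal R, (hmm : m.IsMaximal) → (b ∈ m → m ∈ T) →
      z • IsLocalization.mk' K a ⟨b, hb⟩ ∈ locAt R K m hmm := by
    intro z T hz m hmm hmT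
    by_cases hbm : b ∈ m
    · refine smul_mk'_mem_locAt hmm z a hb (Or.inr ?_)
      have := Finset.inf_le (hmT hbm) (f := g)
      have hzm : z ∈ g m := this hz
      rw [hg] at hzm
      simpa [hmm.isPrime] using hzm
    · exact smul_mk'_mem_locAt hmm z a hb (Or.inl hbm)
  apply Submodule.add_mem_sup
  · refine Submodule.mem_iInf _ |>.2 ?_
    rintro ⟨m, hmX⟩
    refine hmem x S₁ hx m (hX m hmX) fun hbm => ?_
    rw [hS₁, Finset.mem_filter, hS, Set.Finite.mem_toFinset]
    exact ⟨⟨hX m hmX, hbm⟩, hmX⟩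
  · refine Submodule.mem_iInf _ |>.2 ?_
    rintro ⟨m, hmX⟩
    refine hmem y S₂ hy m hmX.1 fun hbm => ?_
    rw [hS₂, Finset.mem_filter, hS, Set.Finite.mem_toFinset]
    exact ⟨⟨hmX.1, hbm⟩, hmX.2⟩

end Aux

/-- For an `h`-local domain `R` with fraction field `K = Q` and a set `X` of maximal
ideals with complement `X'` in `Max(R)`, the module `Q/R` is the internal direct sum of
`R_(X)/R` and `R_(X')/R`. -/
theorem hLocal_quotient_direct_sum (R K : Type u) [CommRing R] [IsDomain R] [Field K]
    [Algebra R K] [IsFractionRing R K] (hR : IsHLocal R)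
    (X : Set (Ideal R)) (hX : ∀ m ∈ X, m.IsMaximal)
    (M₁ M₂ : Submodule R (K ⧸ ringInK R K))
    (hM₁ : M₁ = (locInt R K X hX).map (ringInK R K).mkQ)
    (hM₂ : M₂ = (locInt R K {m | m.IsMaximal ∧ m ∉ X} (fun _ h => h.1)).map
      (ringInK R K).mkQ) :
    M₁ ⊓ M₂ = ⊥ ∧ M₁ ⊔ M₂ = ⊤ := by
  subst hM₁ hM₂
  constructor
  · rw [eq_bot_iff]
    rintro z hz
    obtain ⟨hz₁, hz₂⟩ := Submodule.mem_inf.1 hz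
    obtain ⟨u, hu, rfl⟩ := hz₁
    obtain ⟨v, hv, hvz⟩ := hz₂
    have huv : u - v ∈ ringInK R K :=
      (Submodule.Quotient.eq _).mp (by simpa using hvz.symm)
    have hu' : u ∈ locInt R K {m | m.IsMaximal ∧ m ∉ X} (fun _ h => h.1) := by
      have h : u = v + (u - v) := by ring
      rw [h]
      exact Submodule.add_mem _ hv (ringInK_le_locInt _ _ huv)
    have hfin : u ∈ ringInK R K := by
      rw [← locInt_inf X hX]
      exact Submodule.mem_inf.2 ⟨hu, hu'⟩
    simpa [Submodule.mem_bot, Submodule.Quotient.mk_eq_zero] using hfin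
  · rw [← Submodule.map_sup, locInt_sup hR X hX, Submodule.map_top, Submodule.range_mkQ]
end

section
/- Let R be an h-local domain, X a set of maximal ideals of R, and M₁ := R_(X)/R ⊆ Q/R where R_(X) = ⋂_{m∈X} R_m. Then M₁ is a restriction submodule of Q/R: for every maximal ideal m' of R, the localization (M₁)_{m'} equals 0 if m' ∈ X, and equals (Q/R)_{m'} = Q/R_{m'} if m' ∉ X. -/
universe u

lemma mem_locAt_iff {R K : Type u} [CommRing R] [IsDomain R] [Field K] [Algebra R K]
    [IsFractionRing R K] {m : Ideal R} (hm : m.IsMaximal) {x : K} :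
    x ∈ locAt R K m hm ↔ ∃ a s : R, s ∉ m ∧ algebraMap R K s * x = algebraMap R K a := by
  haveI := hm.isPrime
  constructor
  · rintro ⟨a, s, hs, rfl⟩
    exact ⟨a, s, hs, by rw [mul_comm]; exact IsLocalization.mk'_spec K a _⟩
  · rintro ⟨a, s, hs, h⟩
    have hs0 : s ∈ nonZeroDivisors R :=
      mem_nonZeroDivisors_of_ne_zero (fun h0 => hs (h0 ▸ m.zero_mem))
    exact ⟨a, s, hs, IsLocalization.eq_mk'_iff_mul_eq.mpr (by rw [mul_comm] at h; exact h)⟩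

lemma hlocal_key {R : Type u} [CommRing R] [IsDomain R] (hR : IsHLocal R)
    {m m' : Ideal R} (hm : m.IsMaximal) (hm' : m'.IsMaximal) (hne : m ≠ m')
    {b : R} (hb : b ≠ 0) : ∃ s ∉ m', ∃ t ∉ m, s * t ∈ Ideal.span {b} := by
  haveI hpm := hm.isPrime
  haveI hpm' := hm'.isPrime
  by_contra hcon
  push_neg at hcon
  have h1m : (1 : R) ∉ m := fun h => hpm.ne_top ((Ideal.eq_top_iff_one m).mpr h)
  have h1m' : (1 : R) ∉ m' := fun h => hpm'.ne_top ((Ideal.eq_top_iff_one m').mpr h)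
  set T : Submonoid R :=
    { carrier := {x | ∃ s, s ∉ m' ∧ ∃ t, t ∉ m ∧ x = s * t}
      one_mem' := ⟨1, h1m', 1, h1m, (one_mul 1).symm⟩
      mul_mem' := by
        rintro x y ⟨s1, hs1, t1, ht1, rfl⟩ ⟨s2, hs2, t2, ht2, rfl⟩
        refine ⟨s1 * s2, fun h => ?_, t1 * t2, fun h => ?_, by ring⟩
        · rcases hpm'.mem_or_mem h with h | h; exacts [hs1 h, hs2 h]
        · rcases hpm.mem_or_mem h with h | h; exacts [ht1 h, ht2 h] } with hT
  have hdisj : Disjoint (↑(Ideal.span {b}) : Set R) (T : Set R) := by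
    rw [Set.disjoint_left]
    rintro x hx ⟨s, hs, t, ht, rfl⟩
    exact hcon s hs t ht hx
  obtain ⟨P, hP, hle, hdisjP⟩ := Ideal.exists_le_prime_disjoint (Ideal.span {b}) T hdisj
  have hbP : b ∈ P := hle (Ideal.mem_span_singleton_self b)
  have hP0 : P ≠ ⊥ := by rintro rfl; simpa using hb (by simpa using hbP)
  have hPm : P ≤ m := fun x hx => by
    by_contra hxm
    exact Set.disjoint_left.mp hdisjP hx ⟨1, h1m', x, hxm, (one_mul x).symm⟩
  have hPm' : P ≤ m' := fun x hx => by
    by_contra hxm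
    exact Set.disjoint_left.mp hdisjP hx ⟨x, hxm, 1, h1m, (mul_one x).symm⟩
  haveI hloc := hR.2 P hP0 hP
  obtain ⟨a, ha, c, hc, hac⟩ := Submodule.mem_sup.mp
    (show (1 : R) ∈ m ⊔ m' by rw [hm.coprime_of_ne hm' hne]; trivial)
  have hsum : Ideal.Quotient.mk P a + Ideal.Quotient.mk P c = 1 := by
    rw [← map_add, hac, map_one]
  have key : ∀ e : R, IsUnit (Ideal.Quotient.mk P e) → ∀ (n : Ideal R), n ≠ ⊤ → P ≤ n →
      e ∈ n → False := by
    intro e he n hn hPn hen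
    obtain ⟨d, hd⟩ := he.exists_right_inv
    obtain ⟨d', rfl⟩ := Ideal.Quotient.mk_surjective d
    have hmem : e * d' - 1 ∈ P := by
      rw [← Ideal.Quotient.eq_zero_iff_mem, map_sub, map_mul, hd, map_one, sub_self]
    have h1 : (1 : R) ∈ n := by
      have := n.sub_mem (n.mul_mem_right d' hen) (hPn hmem)
      simpa using this
    exact hn ((Ideal.eq_top_iff_one n).mpr h1)
  rcases IsLocalRing.isUnit_or_isUnit_of_isUnit_add (hsum ▸ isUnit_one) with h | h
  · exact key a h m hpm.ne_top hPm ha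
  · exact key c h m' hpm'.ne_top hPm' hc

/-- For an `h`-local domain `R`, the submodule `M₁ = R_(X)/R ⊆ Q/R` is a restriction
submodule: its localization at a maximal ideal `m'` is `0` when `m' ∈ X` (every element
of `M₁` is killed by some `s ∉ m'`) and is all of `(Q/R)_{m'}` when `m' ∉ X` (every
element of `Q/R` is brought into `M₁` by some `s ∉ m'`). -/
theorem hLocal_restriction_submodule (R K : Type u) [CommRing R] [IsDomain R] [Field K]
    [Algebra R K] [IsFractionRing R K] (hR : IsHLocal R)
    (X : Set (Ideal R)) (hX : ∀ m ∈ X, m.IsMaximal)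
    (M₁ : Submodule R (K ⧸ ringInK R K))
    (hM₁ : M₁ = (locInt R K X hX).map (ringInK R K).mkQ)
    (m' : Ideal R) (hm' : m'.IsMaximal) :
    (m' ∈ X → ∀ x ∈ M₁, ∃ s ∉ m', s • x = 0) ∧
    (m' ∉ X → ∀ y : K ⧸ ringInK R K, ∃ s ∉ m', s • y ∈ M₁) := by
  classical
  haveI hpm' := hm'.isPrime
  constructor
  · intro hmX x hx
    rw [hM₁] at hx
    obtain ⟨q, hq, rfl⟩ := hx
    have hq' : q ∈ locAt R K m' (hX m' hmX) := by
      have hq2 : q ∈ ⨅ m : X, locAt R K m.1 (hX m.1 m.2) := hq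
      exact (Submodule.mem_iInf _).mp hq2 ⟨m', hmX⟩
    obtain ⟨a, s, hs, heq⟩ := (mem_locAt_iff _).mp hq'
    refine ⟨s, hs, ?_⟩
    rw [← LinearMap.map_smul, Submodule.mkQ_apply, Submodule.Quotient.mk_eq_zero]
    exact ⟨a, by simpa [Algebra.smul_def] using heq.symm⟩
  · intro hmX y
    obtain ⟨k, rfl⟩ := (ringInK R K).mkQ_surjective y
    obtain ⟨⟨a, b⟩, hk⟩ := IsLocalization.mk'_surjective (nonZeroDivisors R) k
    have hb0 : (b : R) ≠ 0 := nonZeroDivisors.ne_zero b.2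
    have hbk : algebraMap R K (b : R) * k = algebraMap R K a := by
      rw [← hk, mul_comm]; exact IsLocalization.mk'_spec K a b
    set I := Ideal.span {(b : R)} with hI
    have hI0 : I ≠ ⊥ := by simpa [hI, Ideal.span_singleton_eq_bot] using hb0
    have hfin := hR.1 I hI0
    have hcm : ∀ n : Ideal R, I ≤ n →
        Ideal.comap (Ideal.Quotient.mk I) (Ideal.map (Ideal.Quotient.mk I) n) = n := by
      intro n hIn
      rw [Ideal.comap_map_of_surjective _ Ideal.Quotient.mk_surjective]
      have h2 : Ideal.comap (Ideal.Quotient.mk I) ⊥ = I := by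
        rw [← RingHom.ker_eq_comap_bot, Ideal.mk_ker]
      rw [h2, sup_eq_left.mpr hIn]
    have hMb : {m : Ideal R | m ∈ X ∧ (b : R) ∈ m}.Finite := by
      apply Set.Finite.of_finite_image (f := fun m => Ideal.map (Ideal.Quotient.mk I) m)
      · apply hfin.subset
        rintro _ ⟨n, ⟨hnX, hbn⟩, rfl⟩
        have hmax := hX n hnX
        have hIle : I ≤ n := (Ideal.span_singleton_le_iff_mem _).mpr hbn
        rcases Ideal.map_eq_top_or_isMaximal_of_surjective (Ideal.Quotient.mk I)
          Ideal.Quotient.mk_surjective hmax with h | h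
        · exfalso
          have := hcm n hIle
          rw [h, Ideal.comap_top] at this
          exact hmax.ne_top this.symm
        · exact h
      · intro n1 hn1 n2 hn2 h
        have e1 := hcm n1 ((Ideal.span_singleton_le_iff_mem _).mpr hn1.2)
        have e2 := hcm n2 ((Ideal.span_singleton_le_iff_mem _).mpr hn2.2)
        rw [← e1, ← e2]
        exact congrArg (Ideal.comap (Ideal.Quotient.mk I)) h
    set F := hMb.toFinset with hF
    have Hex : ∀ n ∈ F, ∃ s, s ∉ m' ∧ ∀ hn : n.IsMaximal, s • k ∈ locAt R K n hn := by
      intro n hnF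
      rw [hF, Set.Finite.mem_toFinset] at hnF
      obtain ⟨hnX, hbn⟩ := hnF
      have hmax := hX n hnX
      have hne : n ≠ m' := fun h => hmX (h ▸ hnX)
      obtain ⟨s, hs, t, ht, hst⟩ := hlocal_key hR hmax hm' hne hb0
      obtain ⟨r, hr⟩ := Ideal.mem_span_singleton'.mp hst
      refine ⟨s, hs, fun hn => ?_⟩
      rw [mem_locAt_iff]
      refine ⟨a * r, t, ht, ?_⟩
      calc algebraMap R K t * (s • k) = algebraMap R K (r * (b : R)) * k := by
            simp only [Algebra.smul_def, hr, map_mul]; ring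
        _ = algebraMap R K (a * r) := by
            rw [map_mul, mul_assoc, hbk, ← map_mul, mul_comm r a]
    choose g hg1 hg2 using Hex
    refine ⟨∏ n ∈ F.attach, g n.1 n.2, fun hsm => ?_, ?_⟩
    · obtain ⟨i, -, hi⟩ := Ideal.IsPrime.prod_mem_iff.mp hsm
      exact hg1 i.1 i.2 hi
    · rw [hM₁, ← LinearMap.map_smul]
      apply Submodule.mem_map_of_mem
      have : (∏ n ∈ F.attach, g n.1 n.2) • k ∈ ⨅ m : X, locAt R K m.1 (hX m.1 m.2) := by
        rw [Submodule.mem_iInf]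
        rintro ⟨n, hnX⟩
        by_cases hbn : (b : R) ∈ n
        · have hnF : n ∈ F := by rw [hF, Set.Finite.mem_toFinset]; exact ⟨hnX, hbn⟩
          rw [← Finset.mul_prod_erase F.attach _ (Finset.mem_attach F ⟨n, hnF⟩),
            mul_comm, mul_smul]
          exact Submodule.smul_mem _ _ (hg2 n hnF (hX n hnX))
        · apply Submodule.smul_mem
          rw [mem_locAt_iff]
          exact ⟨a, b, hbn, hbk⟩
      exact this
end

section
/- Let R be a local almost perfect domain with maximal ideal m and Q ≠ R. If M is a finitely presented R-module with projective dimension at most 1 and Ext¹_R(M, R/m) = 0, then M is projective (equivalently, free). -/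
universe u

open CategoryTheory Limits

section ExtVanishAuxSection

namespace ExtVanishAux

variable {R : Type u} [CommRing R] {P M : Type u} [AddCommGroup P] [Module R P]
    [AddCommGroup M] [Module R M]

noncomputable def twoComplex (g : P →ₗ[R] M) : ChainComplex (ModuleCat.{u} R) ℕ :=
  ChainComplex.of
    (fun n => match n with
      | 0 => ModuleCat.of R P
      | 1 => ModuleCat.of R (LinearMap.ker g)
      | _ + 2 => ModuleCat.of R PUnit)
    (fun n => match n with
      | 0 => ModuleCat.ofHom (LinearMap.ker g).subtype
      | _ + 1 => 0)
    (fun n => match n with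
      | 0 => zero_comp
      | _ + 1 => zero_comp)

lemma twoComplex_d_1_0 (g : P →ₗ[R] M) :
    (twoComplex g).d 1 0 = ModuleCat.ofHom (LinearMap.ker g).subtype :=
  by simp [twoComplex, ChainComplex.of.d]

lemma twoComplex_d_succ (g : P →ₗ[R] M) (n : ℕ) :
    (twoComplex g).d (n + 2) (n + 1) = 0 :=
  by simp [twoComplex, ChainComplex.of.d]; rfl

lemma twoComplex_exactAt_succ (g : P →ₗ[R] M) (n : ℕ) :
    (twoComplex g).ExactAt (n + 1) := by
  rw [HomologicalComplex.exactAt_iff' _ (n + 2) (n + 1) n (by simp) (by simp)]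
  rw [ShortComplex.moduleCat_exact_iff]
  match n with
  | 0 =>
    intro x₂ hx₂
    refine ⟨0, ?_⟩
    have hx₂' : (twoComplex g).d 1 0 x₂ = 0 := hx₂
    rw [twoComplex_d_1_0] at hx₂'
    have hx : (LinearMap.ker g).subtype x₂ = 0 := hx₂'
    have : x₂ = 0 := Subtype.ext hx
    rw [this]
    simp
  | (n + 1) =>
    intro x₂ _
    exact ⟨(PUnit.unit : PUnit.{u+1}),
      @Subsingleton.elim _ (inferInstanceAs (Subsingleton PUnit.{u+1})) _ _⟩

noncomputable def twoResolution (g : P →ₗ[R] M) (hg : Function.Surjective g)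
    [hP : Module.Projective R P] [hK : Module.Projective R (LinearMap.ker g)] :
    ProjectiveResolution (ModuleCat.of R M) where
  complex := twoComplex g
  projective n := by
    match n with
    | 0 => exact (IsProjective.iff_projective _).mp hP
    | 1 => exact (IsProjective.iff_projective _).mp hK
    | (n + 2) => exact (ModuleCat.isZero_of_subsingleton (ModuleCat.of R PUnit.{u+1})).projective
  π := (ChainComplex.toSingle₀Equiv _ _).symm ⟨ModuleCat.ofHom g, by
    rw [twoComplex_d_1_0]
    ext x
    exact x.2⟩
  quasiIso := ⟨fun n => by
    cases n with
    | zero =>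
      rw [ChainComplex.quasiIsoAt₀_iff, ShortComplex.quasiIso_iff_of_zeros']
      · have h0 : ModuleCat.ofHom (LinearMap.ker g).subtype ≫ ModuleCat.ofHom g = 0 := by
          ext x
          exact x.2
        refine (ShortComplex.exact_and_epi_g_iff_of_iso
          (S₂ := ShortComplex.mk (ModuleCat.ofHom (LinearMap.ker g).subtype)
            (ModuleCat.ofHom g) h0)
          (ShortComplex.isoMk (Iso.refl _) (Iso.refl _) (Iso.refl _) ?_ ?_)).2 ⟨?_, ?_⟩
        · simp [twoComplex_d_1_0]
        · simp [ChainComplex.toSingle₀Equiv_symm_apply_f_zero]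
        · rw [ShortComplex.moduleCat_exact_iff]
          intro x hx
          exact ⟨⟨x, hx⟩, rfl⟩
        · exact (ModuleCat.epi_iff_surjective _).2 hg
      all_goals rfl
    | succ n =>
      rw [quasiIsoAt_iff_exactAt']
      · exact twoComplex_exactAt_succ g n
      · apply ChainComplex.exactAt_succ_single_obj⟩

lemma hom_surj_of_ext_subsingleton (g : P →ₗ[R] M) (hg : Function.Surjective g)
    [hP : Module.Projective R P] [hK : Module.Projective R (LinearMap.ker g)]
    (N : Type u) [AddCommGroup N] [Module R N]
    (hext : Subsingleton (((Ext R (ModuleCat.{u} R) 1).obj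
      (Opposite.op (ModuleCat.of R M))).obj (ModuleCat.of R N)))
    (φ : LinearMap.ker g →ₗ[R] N) :
    ∃ ψ : P →ₗ[R] N, φ = ψ ∘ₗ (LinearMap.ker g).subtype := by
  let Pr := twoResolution g hg
  let D := (twoComplex g).linearYonedaObj R (ModuleCat.of R N)
  have hz : IsZero (((Ext R (ModuleCat.{u} R) 1).obj
      (Opposite.op (ModuleCat.of R M))).obj (ModuleCat.of R N)) :=
    ModuleCat.isZero_of_subsingleton _
  have hzh : IsZero (D.homology 1) :=
    hz.of_iso (Pr.isoExt 1 (ModuleCat.of R N)).symm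
  have hD : D.ExactAt 1 := (HomologicalComplex.exactAt_iff_isZero_homology _ _).2 hzh
  rw [HomologicalComplex.exactAt_iff' _ 0 1 2 (by simp) (by simp)] at hD
  have hgz : (D.sc' 0 1 2).g = 0 := by
    show D.d 1 2 = 0
    rw [ChainComplex.linearYonedaObj_d, twoComplex_d_succ]
    ext ψ
    simp
    rfl
  have hepi := (ShortComplex.exact_iff_epi _ hgz).1 hD
  have hsurj : Function.Surjective (D.sc' 0 1 2).f :=
    (ModuleCat.epi_iff_surjective _).1 hepi
  obtain ⟨ψ, hψ⟩ := hsurj (show ↑(D.X 1) from ModuleCat.ofHom φ)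
  exact ⟨ψ.hom, (congrArg ModuleCat.Hom.hom hψ).symm⟩

lemma baseChange_injective_of_hom_surj [IsLocalRing R]
    {K : Type u} [AddCommGroup K] [Module R K] (ι : K →ₗ[R] P)
    (hsurj : ∀ φ : K →ₗ[R] (R ⧸ IsLocalRing.maximalIdeal R),
      ∃ ψ : P →ₗ[R] (R ⧸ IsLocalRing.maximalIdeal R), φ = ψ ∘ₗ ι) :
    Function.Injective (ι.lTensor (R ⧸ IsLocalRing.maximalIdeal R)) := by
  set k := R ⧸ IsLocalRing.maximalIdeal R
  letI : Field k := Ideal.Quotient.field _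
  have hbc : Function.Injective (ι.baseChange k) := by
    rw [injective_iff_map_eq_zero]
    intro x hx
    rw [← Module.forall_dual_apply_eq_zero_iff k x]
    intro φ
    obtain ⟨χ, hχ⟩ := hsurj ((φ.restrictScalars R) ∘ₗ ((TensorProduct.mk R k K) 1))
    have key : ∀ y, φ y = (LinearMap.liftBaseChange k χ) (ι.baseChange k y) := by
      intro y
      induction y using TensorProduct.induction_on with
      | zero => simp
      | tmul c z =>
        have h1 : (c ⊗ₜ[R] z : TensorProduct R k K) = c • ((1 : k) ⊗ₜ[R] z) := by
          rw [TensorProduct.smul_tmul']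
          simp
        rw [h1, map_smul, map_smul, map_smul]
        congr 1
        have := congrArg (fun (f : K →ₗ[R] k) => f z) hχ
        simp only [LinearMap.comp_apply, LinearMap.coe_restrictScalars,
          TensorProduct.mk_apply] at this
        rw [this]
        simp
      | add a b ha hb =>
        rw [map_add, map_add, map_add, ha, hb]
    rw [key x, hx, map_zero]
  rw [← LinearMap.baseChange_eq_ltensor]
  exact hbc

end ExtVanishAux

open CategoryTheory in
theorem projective_of_ext_vanish' (R : Type u) [CommRing R] [IsLocalRing R]
    (M : Type u) [AddCommGroup M] [Module R M] [Module.FinitePresentation R M]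
    (Pc : ModuleCat.{u} R) (f : Pc ⟶ ModuleCat.of R M) (hepi : Epi f)
    (hPc : Projective Pc) (hker : Projective (Limits.kernel f))
    (hext : Subsingleton (((Ext R (ModuleCat.{u} R) 1).obj
      (Opposite.op (ModuleCat.of R M))).obj
        (ModuleCat.of R (R ⧸ IsLocalRing.maximalIdeal R)))) :
    Module.Projective R M := by
  let g : ↑Pc →ₗ[R] M := f.hom
  have hg : Function.Surjective g := (ModuleCat.epi_iff_surjective f).1 hepi
  haveI hP : Module.Projective R ↑Pc := (IsProjective.iff_projective _).mpr hPc
  haveI hK : Module.Projective R (LinearMap.ker g) :=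
    (IsProjective.iff_projective _).mpr (Projective.of_iso (ModuleCat.kernelIsoKer f) hker)
  have hsurj := ExtVanishAux.hom_surj_of_ext_subsingleton g hg
    (R ⧸ IsLocalRing.maximalIdeal R) hext
  have hinj := ExtVanishAux.baseChange_injective_of_hom_surj
    (LinearMap.ker g).subtype hsurj
  have hfree : Module.Free R M := by
    apply Module.free_of_maximalIdeal_rTensor_injective
    rw [← LinearMap.lTensor_inj_iff_rTensor_inj]
    exact lTensor_injective_of_exact_of_exact_of_rTensor_injective
      (LinearMap.exact_subtype_ker_map g) hg
      (LinearMap.exact_subtype_mkQ (IsLocalRing.maximalIdeal R))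
      (Submodule.mkQ_surjective _)
      ((LinearMap.lTensor_inj_iff_rTensor_inj _ _).mp hinj)
      (Module.Flat.lTensor_preserves_injective_linearMap _ Subtype.val_injective)
  exact Module.Projective.of_free

end ExtVanishAuxSection

open CategoryTheory in
/-- Over a local almost perfect domain `(R, m)` that is not a field, a finitely presented
module of projective dimension at most `1` with `Ext¹_R(M, R/m) = 0` is projective
(equivalently, free). -/
theorem projective_of_ext_vanish (R : Type u) [CommRing R] [IsDomain R] [IsLocalRing R]
    (hR : IsAPD R) (hQ : ¬ IsField R)
    (M : Type u) [AddCommGroup M] [Module R M] [Module.FinitePresentation R M]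
    (hpd : ProjDimLE R 1 (ModuleCat.of R M))
    (hext : Subsingleton (((Ext R (ModuleCat.{u} R) 1).obj
      (Opposite.op (ModuleCat.of R M))).obj
        (ModuleCat.of R (R ⧸ IsLocalRing.maximalIdeal R)))) :
    Module.Projective R M := by
  obtain ⟨Pc, f, hepi, hPc, hker⟩ := hpd
  exact projective_of_ext_vanish' R M Pc f hepi hPc hker hext
end
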